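/- arXiv:0711.4457 — 5 statements merged into one kernel-verified Lean document; each statement's English description precedes it below -/
import Mathlib

section
/- Let α ∈ (0,2) and let a ∈ L^α(ℝ, dx) with ‖a‖_α > 0. Then there exist constants ε₁ > 0 and ε₂ > 0 and an integer N such that for every n ≥ N, the pair f := a(-·), g := a(n-·) ∈ L^α(ℝ, dx) satisfies Assumption (A1) with constant ε₁ and Assumption (A2) with constant ε₂ (with constants not depending on n). (Paper's Proposition 2.2.) -/
open MeasureTheory Real Set Filter
open scoped ENNReal Topology

noncomputable def nrm (α : ℝ) {S : Type*} [MeasurableSpace S] (μ : Measure S) (f : S → ℝ) : ℝ :=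
  (∫ s, |f s| ^ α ∂μ) ^ (1 / α)

noncomputable def dep2 (α : ℝ) {S : Type*} [MeasurableSpace S] (μ : Measure S) (f g : S → ℝ) : ℝ :=
  ∫ s, |f s * g s| ^ (α / 2) ∂μ

noncomputable def dep1s (α : ℝ) {S : Type*} [MeasurableSpace S] (μ : Measure S) (f g : S → ℝ) : ℝ :=
  ∫ s, |f s| ^ (α - 1) * |g s| ∂μ

noncomputable def dep1 (α : ℝ) {S : Type*} [MeasurableSpace S] (μ : Measure S) (f g : S → ℝ) : ℝ :=
  dep1s α μ f g + dep1s α μ g f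

/-- `f ∈ L^α(S, μ)`. -/
def MemLalpha (α : ℝ) {S : Type*} [MeasurableSpace S] (μ : Measure S) (f : S → ℝ) : Prop :=
  AEStronglyMeasurable f μ ∧ Integrable (fun s => |f s| ^ α) μ

/-- Assumption (A1) with constant ε₁. -/
def A1 (α ε₁ : ℝ) {S : Type*} [MeasurableSpace S] (μ : Measure S) (f g : S → ℝ) : Prop :=
  nrm α μ f ^ (α / 2) * nrm α μ g ^ (α / 2) - dep2 α μ f g
    ≥ ε₁ * (nrm α μ f ^ (α / 2) * nrm α μ g ^ (α / 2))

/-- Assumption (A2) with constant ε₂. -/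
def A2 (α ε₂ : ℝ) {S : Type*} [MeasurableSpace S] (μ : Measure S) (f g : S → ℝ) : Prop :=
  ∀ u v : ℝ, nrm α μ (fun s => u * f s + v * g s) ^ α
    ≥ ε₂ * (|u| ^ α * nrm α μ f ^ α + |v| ^ α * nrm α μ g ^ α)

noncomputable def Ufun (α : ℝ) {S : Type*} [MeasurableSpace S] (μ : Measure S)
    (f g : S → ℝ) (u v : ℝ) : ℝ :=
  Real.exp (-(nrm α μ (fun s => u * f s + v * g s) ^ α)) -
    Real.exp (-(nrm α μ (fun s => u * f s) ^ α) - nrm α μ (fun s => v * g s) ^ α)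

/-- signed power `a^⟨p⟩ = sign(a)|a|^p`. -/
noncomputable def spow (a p : ℝ) : ℝ := Real.sign a * |a| ^ p

noncomputable def D1 (α : ℝ) {S : Type*} [MeasurableSpace S] (μ : Measure S)
    (f g : S → ℝ) (u v : ℝ) : ℝ :=
  -α * (∫ s, spow (u * f s + v * g s) (α - 1) * f s ∂μ) *
      Real.exp (-(nrm α μ (fun s => u * f s + v * g s) ^ α)) +
    α * (∫ s, spow (u * f s) (α - 1) * f s ∂μ) *
      Real.exp (-(nrm α μ (fun s => u * f s) ^ α) - nrm α μ (fun s => v * g s) ^ α)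

noncomputable def D2 (α : ℝ) {S : Type*} [MeasurableSpace S] (μ : Measure S)
    (f g : S → ℝ) (u v : ℝ) : ℝ :=
  -(α * (α - 1)) * (∫ s, (if f s = 0 ∨ g s = 0 then (0:ℝ) else
        |u * f s + v * g s| ^ (α - 2) * (f s * g s)) ∂μ) *
      Real.exp (-(nrm α μ (fun s => u * f s + v * g s) ^ α)) +
    α ^ 2 * (∫ s, spow (u * f s + v * g s) (α - 1) * f s ∂μ) *
      (∫ s, spow (u * f s + v * g s) (α - 1) * g s ∂μ) *
      Real.exp (-(nrm α μ (fun s => u * f s + v * g s) ^ α)) -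
    α ^ 2 * (∫ s, spow (u * f s) (α - 1) * f s ∂μ) *
      (∫ s, spow (v * g s) (α - 1) * g s ∂μ) *
      Real.exp (-(nrm α μ (fun s => u * f s) ^ α) - nrm α μ (fun s => v * g s) ^ α)

/-- `(ξ, η)` is jointly SαS with spectral pair `(f, g)`. -/
def JointSAS (α : ℝ) {S : Type*} [MeasurableSpace S] (μ : Measure S) (f g : S → ℝ)
    {Ω : Type*} [MeasurableSpace Ω] (P : Measure Ω) (ξ η : Ω → ℝ) : Prop :=
  ∀ u v : ℝ, (∫ ω, Complex.exp (Complex.I * ((u * ξ ω + v * η ω : ℝ) : ℂ)) ∂P)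
    = Complex.exp (-((nrm α μ (fun s => u * f s + v * g s) ^ α : ℝ) : ℂ))

lemma rpow_abs_add_le {α : ℝ} (hα0 : 0 < α) (hα2 : α ≤ 2) (s t : ℝ) :
    |s + t| ^ α ≤ 4 * (|s| ^ α + |t| ^ α) := by
  have hmax0 : (0:ℝ) ≤ max |s| |t| := le_trans (abs_nonneg s) (le_max_left _ _)
  have h1 : |s + t| ^ α ≤ (2 * max |s| |t|) ^ α := by
    apply Real.rpow_le_rpow (abs_nonneg _) _ hα0.le
    calc |s + t| ≤ |s| + |t| := abs_add_le s t
      _ ≤ 2 * max |s| |t| := by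
          rcases le_total |s| |t| with h | h
          · simp [max_eq_right h]; linarith
          · simp [max_eq_left h]; linarith
  have h2 : (2 * max |s| |t|) ^ α = 2 ^ α * max |s| |t| ^ α :=
    Real.mul_rpow (by norm_num) hmax0
  have h3 : (2:ℝ) ^ α ≤ 4 := by
    have := Real.rpow_le_rpow_of_exponent_le (one_le_two (α := ℝ)) hα2
    rwa [show ((2:ℝ) ^ (2:ℝ)) = 4 by
      rw [show (2:ℝ) = ((2:ℕ):ℝ) from by norm_num, Real.rpow_natCast]; norm_num] at this
  have h4 : max |s| |t| ^ α ≤ |s| ^ α + |t| ^ α := by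
    rcases le_total |s| |t| with h | h
    · rw [max_eq_right h]
      have := Real.rpow_nonneg (abs_nonneg s) α; linarith
    · rw [max_eq_left h]
      have := Real.rpow_nonneg (abs_nonneg t) α; linarith
  have h5 : (0:ℝ) ≤ max |s| |t| ^ α := Real.rpow_nonneg hmax0 α
  have h6 : (0:ℝ) < (2:ℝ) ^ α := Real.rpow_pos_of_pos (by norm_num) α
  calc |s + t| ^ α ≤ 2 ^ α * max |s| |t| ^ α := by rw [← h2]; exact h1
    _ ≤ 4 * (max |s| |t| ^ α) := by nlinarith
    _ ≤ 4 * (|s| ^ α + |t| ^ α) := by linarith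

lemma rpow_abs_le_add {α : ℝ} (hα0 : 0 < α) (hα2 : α ≤ 2) (s t : ℝ) :
    |s| ^ α ≤ 4 * (|s + t| ^ α + |t| ^ α) := by
  have := rpow_abs_add_le hα0 hα2 (s + t) (-t)
  simpa using this

lemma amgm_rpow {α : ℝ} (hα0 : 0 < α) (x y : ℝ) :
    |x * y| ^ (α / 2) ≤ (1/8) * |x| ^ α + 2 * |y| ^ α := by
  have hXsq : |x| ^ (α/2) * |x| ^ (α/2) = |x| ^ α := by
    rw [← Real.rpow_add' (abs_nonneg x) (by intro h; nlinarith)]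
    norm_num
  have hYsq : |y| ^ (α/2) * |y| ^ (α/2) = |y| ^ α := by
    rw [← Real.rpow_add' (abs_nonneg y) (by intro h; nlinarith)]
    norm_num
  have hXY : |x * y| ^ (α/2) = |x| ^ (α/2) * |y| ^ (α/2) := by
    rw [abs_mul, Real.mul_rpow (abs_nonneg x) (abs_nonneg y)]
  set X := |x| ^ (α/2)
  set Y := |y| ^ (α/2)
  have hX0 : 0 ≤ X := Real.rpow_nonneg (abs_nonneg x) _
  have hY0 : 0 ≤ Y := Real.rpow_nonneg (abs_nonneg y) _
  rw [hXY, ← hXsq, ← hYsq]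
  nlinarith [sq_nonneg (X - 4 * Y)]

lemma setIntegral_comp_const_sub (F : ℝ → ℝ) (c p q : ℝ) :
    ∫ x in Icc p q, F (c - x) = ∫ y in Icc (c - q) (c - p), F y := by
  rw [← integral_indicator measurableSet_Icc, ← integral_indicator measurableSet_Icc]
  have heq : (Icc p q).indicator (fun x => F (c - x)) =
      fun x => (Icc (c - q) (c - p)).indicator F (c - x) := by
    funext x
    by_cases hx : x ∈ Icc p q
    · rw [indicator_of_mem hx, indicator_of_mem]
      rw [mem_Icc] at hx ⊢; constructor <;> linarith [hx.1, hx.2]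
    · rw [indicator_of_notMem hx, indicator_of_notMem]
      intro h; apply hx; rw [mem_Icc] at h ⊢; constructor <;> linarith [h.1, h.2]
  rw [heq, integral_sub_left_eq_self _ volume c]

set_option maxHeartbeats 1000000 in
/-- Paper's Proposition 2.2: the pair `(a(-·), a(n-·))` satisfies Assumptions (A1)
and (A2) for all sufficiently large `n`, with constants not depending on `n`. -/
theorem stmt1 (α : ℝ) (hα0 : 0 < α) (hα2 : α < 2) (a : ℝ → ℝ)
    (ha : MemLalpha α (volume : Measure ℝ) a)
    (hpos : 0 < nrm α (volume : Measure ℝ) a) :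
    ∃ ε₁ > (0:ℝ), ∃ ε₂ > (0:ℝ), ∃ N : ℕ, ∀ n : ℕ, N ≤ n →
      A1 α ε₁ (volume : Measure ℝ) (fun x => a (-x)) (fun x => a ((n : ℝ) - x)) ∧
      A2 α ε₂ (volume : Measure ℝ) (fun x => a (-x)) (fun x => a ((n : ℝ) - x)) := by
  obtain ⟨haM, haI⟩ := ha
  have hα_ne : α ≠ 0 := ne_of_gt hα0
  set I : ℝ := ∫ x, |a x| ^ α with hIdef
  have hInn : 0 ≤ I := integral_nonneg fun x => Real.rpow_nonneg (abs_nonneg _) α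
  have hI : 0 < I := by
    rcases hInn.lt_or_eq with h | h
    · exact h
    · exfalso
      simp only [nrm] at hpos
      rw [← hIdef, ← h, Real.zero_rpow (by positivity)] at hpos
      exact lt_irrefl 0 hpos
  have hUnion : (⋃ M : ℕ, Icc (-(M:ℝ)) (M:ℝ)) = univ := by
    ext x
    simp only [mem_iUnion, mem_univ, iff_true, mem_Icc]
    obtain ⟨M, hMx⟩ := exists_nat_ge |x|
    exact ⟨M, (abs_le.mp hMx).1, (abs_le.mp hMx).2⟩
  have htendsto : Tendsto (fun M : ℕ => ∫ x in Icc (-(M:ℝ)) (M:ℝ), |a x| ^ α) atTop (𝓝 I) := by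
    have h := tendsto_setIntegral_of_monotone (μ := volume)
      (s := fun M : ℕ => Icc (-(M:ℝ)) (M:ℝ)) (f := fun x => |a x| ^ α)
      (fun _ => measurableSet_Icc)
      (fun i j hij => Icc_subset_Icc (neg_le_neg (by exact_mod_cast hij)) (by exact_mod_cast hij))
      (by rw [hUnion]; exact haI.integrableOn)
    rwa [hUnion, Measure.restrict_univ] at h
  have hev : ∀ᶠ M : ℕ in atTop, I - I/16 < ∫ x in Icc (-(M:ℝ)) (M:ℝ), |a x| ^ α :=
    htendsto.eventually (eventually_gt_nhds (by linarith))
  obtain ⟨M, hM⟩ := hev.exists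
  set J : ℝ := ∫ x in Icc (-(M:ℝ)) (M:ℝ), |a x| ^ α with hJdef
  have hnn_ae : ∀ᵐ x : ℝ, 0 ≤ |a x| ^ α :=
    Filter.Eventually.of_forall fun x => Real.rpow_nonneg (abs_nonneg _) α
  have hJle : J ≤ I := setIntegral_le_integral haI hnn_ae
  refine ⟨1/2, by norm_num, 1/8, by norm_num, 2*M+1, fun n hn => ?_⟩
  set c : ℝ := (n : ℝ) with hc
  have hcM : (M:ℝ) * 2 + 1 ≤ c := by
    have h : ((2*M+1 : ℕ) : ℝ) ≤ (n:ℝ) := Nat.cast_le.mpr hn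
    push_cast at h; rw [hc]; linarith
  -- measurability / integrability of the two translates
  have hgm : AEStronglyMeasurable (fun x => a (c - x)) volume := by
    have := haM.comp_quasiMeasurePreserving
      (Measure.measurePreserving_sub_left volume c).quasiMeasurePreserving
    simpa [Function.comp_def] using this
  have hfm : AEStronglyMeasurable (fun x => a (-x)) volume := by
    have := haM.comp_quasiMeasurePreserving
      (Measure.measurePreserving_sub_left volume (0:ℝ)).quasiMeasurePreserving
    simpa [Function.comp_def, zero_sub] using this
  have hg_int : Integrable (fun x => |a (c - x)| ^ α) volume := haI.comp_sub_left c
  have hf_int : Integrable (fun x => |a (-x)| ^ α) volume := by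
    simpa [zero_sub] using (haI.comp_sub_left (0:ℝ))
  have hIg : ∫ x, |a (c - x)| ^ α = I := by
    rw [hIdef]; exact integral_sub_left_eq_self (fun y => |a y| ^ α) volume c
  have hIf : ∫ x, |a (-x)| ^ α = I := by
    rw [hIdef]
    have h := integral_sub_left_eq_self (fun y => |a y| ^ α) volume (0:ℝ)
    simpa [zero_sub] using h
  -- set-integral identities
  have hJf1 : ∫ x in Icc (-(M:ℝ)) (M:ℝ), |a (-x)| ^ α = J := by
    have h := setIntegral_comp_const_sub (fun y => |a y| ^ α) 0 (-(M:ℝ)) (M:ℝ)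
    rw [show (0:ℝ) - (M:ℝ) = -(M:ℝ) by ring, show (0:ℝ) - -(M:ℝ) = (M:ℝ) by ring] at h
    rw [hJdef, ← h]
    simp [zero_sub]
  have hJg2 : ∫ x in Icc (c - M) (c + M), |a (c - x)| ^ α = J := by
    have h := setIntegral_comp_const_sub (fun y => |a y| ^ α) c (c - M) (c + M)
    rw [show c - (c + M) = -(M:ℝ) by ring, show c - (c - M) = (M:ℝ) by ring] at h
    rw [hJdef]; exact h
  have hcompl : ∫ x in (Icc (-(M:ℝ)) (M:ℝ))ᶜ, |a x| ^ α = I - J := by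
    have h := integral_add_compl (measurableSet_Icc (a := -(M:ℝ)) (b := (M:ℝ))) haI
    have h2 : J + ∫ x in (Icc (-(M:ℝ)) (M:ℝ))ᶜ, |a x| ^ α = I := h
    linarith
  have hg1 : ∫ x in Icc (-(M:ℝ)) (M:ℝ), |a (c - x)| ^ α ≤ I - J := by
    have h := setIntegral_comp_const_sub (fun y => |a y| ^ α) c (-(M:ℝ)) (M:ℝ)
    rw [show c - -(M:ℝ) = c + (M:ℝ) by ring] at h
    rw [h, ← hcompl]
    apply setIntegral_mono_set haI.integrableOn
      (Filter.Eventually.of_forall fun x => Real.rpow_nonneg (abs_nonneg _) α)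
    apply HasSubset.Subset.eventuallyLE
    intro x hx
    rw [mem_Icc] at hx
    simp only [mem_compl_iff, mem_Icc, not_and_or, not_le]
    right
    linarith [hx.1]
  have hf2 : ∫ x in Icc (c - M) (c + M), |a (-x)| ^ α ≤ I - J := by
    have h := setIntegral_comp_const_sub (fun y => |a y| ^ α) 0 (c - M) (c + M)
    rw [show (0:ℝ) - (c + M) = -(c + M) by ring, show (0:ℝ) - (c - M) = (M:ℝ) - c by ring] at h
    have h' : ∫ x in Icc (c - M) (c + M), |a (-x)| ^ α
        = ∫ y in Icc (-(c + M)) ((M:ℝ) - c), |a y| ^ α := by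
      rw [← h]; simp [zero_sub]
    rw [h', ← hcompl]
    apply setIntegral_mono_set haI.integrableOn
      (Filter.Eventually.of_forall fun x => Real.rpow_nonneg (abs_nonneg _) α)
    apply HasSubset.Subset.eventuallyLE
    intro x hx
    rw [mem_Icc] at hx
    simp only [mem_compl_iff, mem_Icc, not_and_or, not_le]
    left
    linarith [hx.2]
  have hdisj : Disjoint (Icc (-(M:ℝ)) (M:ℝ)) (Icc (c - M) (c + M)) := by
    apply Set.disjoint_left.mpr
    intro x hx1 hx2
    rw [mem_Icc] at hx1 hx2
    linarith [hx1.2, hx2.1]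
  have hnrm_f : nrm α volume (fun x => a (-x)) = I ^ (1/α) := by
    simp only [nrm]; rw [hIf]
  have hnrm_g : nrm α volume (fun x => a (c - x)) = I ^ (1/α) := by
    simp only [nrm]; rw [hIg]
  have hIJ16 : I - J < I / 16 := by linarith
  constructor
  · -- A1
    simp only [A1, dep2]
    have hprod : nrm α volume (fun x => a (-x)) ^ (α/2)
        * nrm α volume (fun x => a (c - x)) ^ (α/2) = I := by
      rw [hnrm_f, hnrm_g, ← Real.rpow_mul hInn, show 1/α*(α/2) = 1/2 by field_simp,
        ← Real.rpow_add hI, show (1/2 + 1/2 : ℝ) = 1 by norm_num, Real.rpow_one]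
    have hψm : AEStronglyMeasurable (fun x => |a (-x) * a (c - x)| ^ (α/2)) volume :=
      ((Real.continuous_rpow_const (by positivity)).comp continuous_abs).comp_aestronglyMeasurable
        (hfm.mul hgm)
    have hDom0 : Integrable (fun x => (1/8) * |a (-x)| ^ α + 2 * |a (c - x)| ^ α) volume := by
      exact (hf_int.const_mul (1/8)).add (hg_int.const_mul 2)
    have hDom2 : Integrable (fun x => 2 * |a (-x)| ^ α + (1/8) * |a (c - x)| ^ α) volume := by
      exact (hf_int.const_mul 2).add (hg_int.const_mul (1/8))
    have hψ_int : Integrable (fun x => |a (-x) * a (c - x)| ^ (α/2)) volume := by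
      apply Integrable.mono hDom0 hψm
      apply Filter.Eventually.of_forall
      intro x
      simp only [Real.norm_eq_abs]
      calc |(|a (-x) * a (c - x)| ^ (α/2))| = |a (-x) * a (c - x)| ^ (α/2) :=
            abs_of_nonneg (Real.rpow_nonneg (abs_nonneg _) _)
        _ ≤ (1/8) * |a (-x)| ^ α + 2 * |a (c - x)| ^ α := amgm_rpow hα0 _ _
        _ ≤ |(1/8) * |a (-x)| ^ α + 2 * |a (c - x)| ^ α| := le_abs_self _
    have hsplit := integral_add_compl (measurableSet_Icc (a := -(M:ℝ)) (b := (M:ℝ))) hψ_int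
    have hb1 : ∫ x in Icc (-(M:ℝ)) (M:ℝ), |a (-x) * a (c - x)| ^ (α/2)
        ≤ (1/8) * J + 2 * (I - J) := by
      calc ∫ x in Icc (-(M:ℝ)) (M:ℝ), |a (-x) * a (c - x)| ^ (α/2)
          ≤ ∫ x in Icc (-(M:ℝ)) (M:ℝ), ((1/8) * |a (-x)| ^ α + 2 * |a (c - x)| ^ α) :=
            setIntegral_mono hψ_int.integrableOn hDom0.integrableOn
              (fun x => amgm_rpow hα0 _ _)
        _ = (1/8) * (∫ x in Icc (-(M:ℝ)) (M:ℝ), |a (-x)| ^ α)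
            + 2 * ∫ x in Icc (-(M:ℝ)) (M:ℝ), |a (c - x)| ^ α := by
            rw [integral_add ((hf_int.const_mul (1/8)).integrableOn)
              ((hg_int.const_mul 2).integrableOn), integral_const_mul, integral_const_mul]
        _ ≤ (1/8) * J + 2 * (I - J) := by
            rw [hJf1]; linarith [hg1]
    have hg_le_I : ∫ x in (Icc (-(M:ℝ)) (M:ℝ))ᶜ, |a (c - x)| ^ α ≤ I := by
      rw [← hIg]
      exact setIntegral_le_integral hg_int
        (Filter.Eventually.of_forall fun x => Real.rpow_nonneg (abs_nonneg _) α)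
    have hfc : ∫ x in (Icc (-(M:ℝ)) (M:ℝ))ᶜ, |a (-x)| ^ α = I - J := by
      have h := integral_add_compl (measurableSet_Icc (a := -(M:ℝ)) (b := (M:ℝ))) hf_int
      rw [hJf1, hIf] at h
      linarith
    have hb2 : ∫ x in (Icc (-(M:ℝ)) (M:ℝ))ᶜ, |a (-x) * a (c - x)| ^ (α/2)
        ≤ 2 * (I - J) + (1/8) * I := by
      calc ∫ x in (Icc (-(M:ℝ)) (M:ℝ))ᶜ, |a (-x) * a (c - x)| ^ (α/2)
          ≤ ∫ x in (Icc (-(M:ℝ)) (M:ℝ))ᶜ, (2 * |a (-x)| ^ α + (1/8) * |a (c - x)| ^ α) := by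
            exact setIntegral_mono hψ_int.integrableOn hDom2.integrableOn
              (fun x => by
                have h := amgm_rpow hα0 (a (c - x)) (a (-x))
                rw [mul_comm (a (c - x))] at h
                linarith)
        _ = 2 * (∫ x in (Icc (-(M:ℝ)) (M:ℝ))ᶜ, |a (-x)| ^ α)
            + (1/8) * ∫ x in (Icc (-(M:ℝ)) (M:ℝ))ᶜ, |a (c - x)| ^ α := by
            rw [integral_add ((hf_int.const_mul 2).integrableOn)
              ((hg_int.const_mul (1/8)).integrableOn), integral_const_mul, integral_const_mul]
        _ ≤ 2 * (I - J) + (1/8) * I := by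
            rw [hfc]; linarith [hg_le_I]
    rw [ge_iff_le, hprod]
    have hdep : ∫ x, |a (-x) * a (c - x)| ^ (α/2) ≤ I / 2 := by
      rw [← hsplit]; linarith
    linarith
  · -- A2
    simp only [A2]
    intro u v
    have hnf : nrm α volume (fun x => a (-x)) ^ α = I := by
      rw [hnrm_f, ← Real.rpow_mul hInn, show 1/α*α = 1 by field_simp, Real.rpow_one]
    have hng : nrm α volume (fun x => a (c - x)) ^ α = I := by
      rw [hnrm_g, ← Real.rpow_mul hInn, show 1/α*α = 1 by field_simp, Real.rpow_one]
    have habs : ∀ x : ℝ, |u * a (-x)| ^ α = |u| ^ α * |a (-x)| ^ α := fun x => by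
      rw [abs_mul, Real.mul_rpow (abs_nonneg _) (abs_nonneg _)]
    have habsv : ∀ x : ℝ, |v * a (c - x)| ^ α = |v| ^ α * |a (c - x)| ^ α := fun x => by
      rw [abs_mul, Real.mul_rpow (abs_nonneg _) (abs_nonneg _)]
    have hhm : AEStronglyMeasurable (fun x => |u * a (-x) + v * a (c - x)| ^ α) volume :=
      ((Real.continuous_rpow_const hα0.le).comp continuous_abs).comp_aestronglyMeasurable
        ((hfm.const_mul u).add (hgm.const_mul v))
    have hDom3 : Integrable
        (fun x => 4 * (|u| ^ α * |a (-x)| ^ α + |v| ^ α * |a (c - x)| ^ α)) volume := by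
      exact ((hf_int.const_mul (|u| ^ α)).add (hg_int.const_mul (|v| ^ α))).const_mul 4
    have hh_int : Integrable (fun x => |u * a (-x) + v * a (c - x)| ^ α) volume := by
      apply Integrable.mono hDom3 hhm
      apply Filter.Eventually.of_forall
      intro x
      simp only [Real.norm_eq_abs]
      calc |(|u * a (-x) + v * a (c - x)| ^ α)| = |u * a (-x) + v * a (c - x)| ^ α :=
            abs_of_nonneg (Real.rpow_nonneg (abs_nonneg _) _)
        _ ≤ 4 * (|u * a (-x)| ^ α + |v * a (c - x)| ^ α) := rpow_abs_add_le hα0 hα2.le _ _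
        _ = 4 * (|u| ^ α * |a (-x)| ^ α + |v| ^ α * |a (c - x)| ^ α) := by
            rw [habs, habsv]
        _ ≤ |4 * (|u| ^ α * |a (-x)| ^ α + |v| ^ α * |a (c - x)| ^ α)| := le_abs_self _
    have hnn2 : 0 ≤ ∫ x, |u * a (-x) + v * a (c - x)| ^ α :=
      integral_nonneg fun x => Real.rpow_nonneg (abs_nonneg _) _
    have hnh : nrm α volume (fun x => u * a (-x) + v * a (c - x)) ^ α
        = ∫ x, |u * a (-x) + v * a (c - x)| ^ α := by
      simp only [nrm]
      rw [← Real.rpow_mul hnn2, show 1/α*α = 1 by field_simp, Real.rpow_one]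
    have hXnn : 0 ≤ |u| ^ α := Real.rpow_nonneg (abs_nonneg u) α
    have hYnn : 0 ≤ |v| ^ α := Real.rpow_nonneg (abs_nonneg v) α
    -- lower bound on S₁
    have hpt1 : ∀ x : ℝ, (1/4) * (|u| ^ α * |a (-x)| ^ α) - |v| ^ α * |a (c - x)| ^ α
        ≤ |u * a (-x) + v * a (c - x)| ^ α := by
      intro x
      have h := rpow_abs_le_add hα0 hα2.le (u * a (-x)) (v * a (c - x))
      rw [habs x, habsv x] at h
      linarith
    have hlhs1_int : Integrable
        (fun x => (1/4) * (|u| ^ α * |a (-x)| ^ α) - |v| ^ α * |a (c - x)| ^ α) volume :=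
      ((hf_int.const_mul (|u| ^ α)).const_mul (1/4)).sub (hg_int.const_mul (|v| ^ α))
    have hmono1 := setIntegral_mono (μ := volume) (s := Icc (-(M:ℝ)) (M:ℝ))
      hlhs1_int.integrableOn hh_int.integrableOn hpt1
    have hcalc1 : ∫ x in Icc (-(M:ℝ)) (M:ℝ),
        ((1/4) * (|u| ^ α * |a (-x)| ^ α) - |v| ^ α * |a (c - x)| ^ α)
        = (1/4) * (|u| ^ α * J) - |v| ^ α * ∫ x in Icc (-(M:ℝ)) (M:ℝ), |a (c - x)| ^ α := by
      rw [integral_sub (((hf_int.const_mul (|u| ^ α)).const_mul (1/4)).integrableOn)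
        ((hg_int.const_mul (|v| ^ α)).integrableOn),
        integral_const_mul, integral_const_mul, integral_const_mul, hJf1]
    have h1 : (1/4) * (|u| ^ α * J) - |v| ^ α * (I - J)
        ≤ ∫ x in Icc (-(M:ℝ)) (M:ℝ), |u * a (-x) + v * a (c - x)| ^ α := by
      rw [hcalc1] at hmono1
      have h := mul_le_mul_of_nonneg_left hg1 hYnn
      linarith
    -- lower bound on S₂
    have hpt2 : ∀ x : ℝ, (1/4) * (|v| ^ α * |a (c - x)| ^ α) - |u| ^ α * |a (-x)| ^ α
        ≤ |u * a (-x) + v * a (c - x)| ^ α := by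
      intro x
      have h := rpow_abs_le_add hα0 hα2.le (v * a (c - x)) (u * a (-x))
      rw [add_comm (v * a (c - x))] at h
      rw [habs x, habsv x] at h
      linarith
    have hlhs2_int : Integrable
        (fun x => (1/4) * (|v| ^ α * |a (c - x)| ^ α) - |u| ^ α * |a (-x)| ^ α) volume :=
      ((hg_int.const_mul (|v| ^ α)).const_mul (1/4)).sub (hf_int.const_mul (|u| ^ α))
    have hmono2 := setIntegral_mono (μ := volume) (s := Icc (c - M) (c + M))
      hlhs2_int.integrableOn hh_int.integrableOn hpt2
    have hcalc2 : ∫ x in Icc (c - M) (c + M),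
        ((1/4) * (|v| ^ α * |a (c - x)| ^ α) - |u| ^ α * |a (-x)| ^ α)
        = (1/4) * (|v| ^ α * J) - |u| ^ α * ∫ x in Icc (c - M) (c + M), |a (-x)| ^ α := by
      rw [integral_sub (((hg_int.const_mul (|v| ^ α)).const_mul (1/4)).integrableOn)
        ((hf_int.const_mul (|u| ^ α)).integrableOn),
        integral_const_mul, integral_const_mul, integral_const_mul, hJg2]
    have h2 : (1/4) * (|v| ^ α * J) - |u| ^ α * (I - J)
        ≤ ∫ x in Icc (c - M) (c + M), |u * a (-x) + v * a (c - x)| ^ α := by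
      rw [hcalc2] at hmono2
      have h := mul_le_mul_of_nonneg_left hf2 hXnn
      linarith
    have hunion : ∫ x in Icc (-(M:ℝ)) (M:ℝ) ∪ Icc (c - M) (c + M),
        |u * a (-x) + v * a (c - x)| ^ α
        = (∫ x in Icc (-(M:ℝ)) (M:ℝ), |u * a (-x) + v * a (c - x)| ^ α)
          + ∫ x in Icc (c - M) (c + M), |u * a (-x) + v * a (c - x)| ^ α :=
      setIntegral_union hdisj measurableSet_Icc hh_int.integrableOn hh_int.integrableOn
    have htot : ∫ x in Icc (-(M:ℝ)) (M:ℝ) ∪ Icc (c - M) (c + M),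
        |u * a (-x) + v * a (c - x)| ^ α ≤ ∫ x, |u * a (-x) + v * a (c - x)| ^ α :=
      setIntegral_le_integral hh_int
        (Filter.Eventually.of_forall fun x => Real.rpow_nonneg (abs_nonneg _) α)
    rw [ge_iff_le, hnh, hnf, hng]
    have k1 : |u| ^ α * (I/8) ≤ |u| ^ α * ((1/4) * J - (I - J)) :=
      mul_le_mul_of_nonneg_left (by linarith) hXnn
    have k2 : |v| ^ α * (I/8) ≤ |v| ^ α * ((1/4) * J - (I - J)) :=
      mul_le_mul_of_nonneg_left (by linarith) hYnn
    have hsum : (1/4) * (|u| ^ α * J) - |v| ^ α * (I - J)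
        + ((1/4) * (|v| ^ α * J) - |u| ^ α * (I - J))
        ≤ ∫ x, |u * a (-x) + v * a (c - x)| ^ α :=
      le_trans (le_trans (add_le_add h1 h2) hunion.ge) htot
    linarith [hsum, k1, k2]
end

section
/- Let α ∈ (0,2) and f, g ∈ L^α(S, μ). Then for all u, v ∈ ℝ: (i) |U(u,v)| ≤ 2|uv|^{α/2}[f,g]₂; (ii) |U(u,v)| ≤ 2|uv|^{α/2} exp(−(|u|^{α/2}‖f‖_α^{α/2} − |v|^{α/2}‖g‖_α^{α/2})²) [f,g]₂; (iii) |U(u,v)| ≤ 2|uv|^{α/2} exp(−2(‖f‖_α^{α/2}‖g‖_α^{α/2} − [f,g]₂)|uv|^{α/2}) [f,g]₂. (Paper's Lemma 3.1.) -/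
open MeasureTheory Real Set Filter
open scoped ENNReal Topology

section Helpers
open scoped NNReal


private lemma rpow_add_le_add_rpow' {p x y : ℝ} (hp : 0 ≤ p) (hp1 : p ≤ 1)
    (hx : 0 ≤ x) (hy : 0 ≤ y) : (x + y) ^ p ≤ x ^ p + y ^ p := by
  lift x to ℝ≥0 using hx
  lift y to ℝ≥0 using hy
  exact_mod_cast NNReal.rpow_add_le_add_rpow x y hp hp1

private lemma key_pointwise {α : ℝ} (hα0 : 0 < α) (hα2 : α ≤ 2) (a b : ℝ) :
    ‖|a + b| ^ α - |a| ^ α - |b| ^ α‖ ≤ 2 * (|a| ^ (α / 2) * |b| ^ (α / 2)) := by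
  wlog hab : |b| ≤ |a| generalizing a b with H
  · have h := H b a (le_of_not_ge hab)
    have e : |a + b| ^ α - |a| ^ α - |b| ^ α = |b + a| ^ α - |b| ^ α - |a| ^ α := by
      rw [add_comm a b]; ring
    rw [e]
    calc ‖|b + a| ^ α - |b| ^ α - |a| ^ α‖ ≤ 2 * (|b| ^ (α / 2) * |a| ^ (α / 2)) := h
      _ = 2 * (|a| ^ (α / 2) * |b| ^ (α / 2)) := by ring
  have hp0 : (0:ℝ) < α / 2 := by positivity
  have hp1 : α / 2 ≤ 1 := by linarith
  have hx0 : (0:ℝ) ≤ |a| := abs_nonneg a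
  have hy0 : (0:ℝ) ≤ |b| := abs_nonneg b
  have hX0 : 0 ≤ |a| ^ (α / 2) := Real.rpow_nonneg hx0 _
  have hY0 : 0 ≤ |b| ^ (α / 2) := Real.rpow_nonneg hy0 _
  have hxα : |a| ^ α = (|a| ^ (α / 2)) ^ 2 := by
    rw [show α = α / 2 * 2 by ring, Real.rpow_mul hx0, Real.rpow_two]
    ring_nf
  have hyα : |b| ^ α = (|b| ^ (α / 2)) ^ 2 := by
    rw [show α = α / 2 * 2 by ring, Real.rpow_mul hy0, Real.rpow_two]
    ring_nf
  have hup : |a + b| ^ α ≤ (|a| ^ (α/2)) ^ 2 + (|b| ^ (α/2)) ^ 2 + 2 * (|a| ^ (α/2) * |b| ^ (α/2)) := by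
    have h1 : (|a| + |b|) ^ (α/2) ≤ |a| ^ (α/2) + |b| ^ (α/2) :=
      rpow_add_le_add_rpow' hp0.le hp1 hx0 hy0
    have h2 : 0 ≤ (|a| + |b|) ^ (α/2) := Real.rpow_nonneg (by positivity) _
    calc |a + b| ^ α ≤ (|a| + |b|) ^ α := Real.rpow_le_rpow (abs_nonneg _) (abs_add_le a b) hα0.le
      _ = ((|a| + |b|) ^ (α/2)) ^ 2 := by
          rw [show α = α / 2 * 2 by ring, Real.rpow_mul (by positivity), Real.rpow_two]; ring_nf
      _ ≤ (|a| ^ (α/2) + |b| ^ (α/2)) ^ 2 := by nlinarith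
      _ = (|a| ^ (α/2)) ^ 2 + (|b| ^ (α/2)) ^ 2 + 2 * (|a| ^ (α/2) * |b| ^ (α/2)) := by ring
  have hd : |a| - |b| ≤ |a + b| := by
    have h := abs_add_le (a + b) (-b)
    simp only [add_neg_cancel_right, abs_neg] at h
    linarith
  have hXY : |b| ^ (α/2) ≤ |a| ^ (α/2) := Real.rpow_le_rpow hy0 hab hp0.le
  have hsub : |a| ^ (α/2) - |b| ^ (α/2) ≤ (|a| - |b|) ^ (α/2) := by
    have h := rpow_add_le_add_rpow' hp0.le hp1 (sub_nonneg.2 hab) hy0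
    rw [sub_add_cancel] at h
    linarith
  have hlow : (|a| ^ (α/2)) ^ 2 + (|b| ^ (α/2)) ^ 2 - 2 * (|a| ^ (α/2) * |b| ^ (α/2)) ≤ |a + b| ^ α := by
    calc (|a| ^ (α/2)) ^ 2 + (|b| ^ (α/2)) ^ 2 - 2 * (|a| ^ (α/2) * |b| ^ (α/2))
        = (|a| ^ (α/2) - |b| ^ (α/2)) ^ 2 := by ring
      _ ≤ ((|a| - |b|) ^ (α/2)) ^ 2 := by nlinarith [sub_nonneg.2 hXY]
      _ = (|a| - |b|) ^ α := by
          rw [show α = α / 2 * 2 by ring, Real.rpow_mul (sub_nonneg.2 hab), Real.rpow_two]; ring_nf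
      _ ≤ |a + b| ^ α := Real.rpow_le_rpow (sub_nonneg.2 hab) hd hα0.le
  rw [Real.norm_eq_abs, hxα, hyα, abs_le]
  constructor <;> linarith

private lemma exp_diff_le_aux {a b : ℝ} (h : a ≤ b) :
    |Real.exp (-a) - Real.exp (-b)| ≤ (b - a) * Real.exp (-a) := by
  have h1 : Real.exp (-b) ≤ Real.exp (-a) := Real.exp_le_exp.2 (by linarith)
  rw [abs_of_nonneg (by linarith)]
  have h2 : Real.exp (-a) * Real.exp (-(b - a)) = Real.exp (-b) := by
    rw [← Real.exp_add]; congr 1; ring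
  have h3 : 1 - Real.exp (-(b - a)) ≤ b - a := by
    have := Real.add_one_le_exp (-(b - a)); linarith
  nlinarith [Real.exp_pos (-a), Real.exp_pos (-(b - a))]

private lemma exp_diff_le' (a b m : ℝ) (hma : m ≤ a) (hmb : m ≤ b) :
    |Real.exp (-a) - Real.exp (-b)| ≤ |a - b| * Real.exp (-m) := by
  rcases le_total a b with h | h
  · have h1 := exp_diff_le_aux h
    have h2 : Real.exp (-a) ≤ Real.exp (-m) := Real.exp_le_exp.2 (by linarith)
    have h3 : |a - b| = b - a := by rw [abs_sub_comm, abs_of_nonneg (sub_nonneg.2 h)]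
    rw [h3]
    calc |Real.exp (-a) - Real.exp (-b)| ≤ (b - a) * Real.exp (-a) := h1
      _ ≤ (b - a) * Real.exp (-m) := by nlinarith
  · have h1 := exp_diff_le_aux h
    have h2 : Real.exp (-b) ≤ Real.exp (-m) := Real.exp_le_exp.2 (by linarith)
    have h3 : |a - b| = a - b := abs_of_nonneg (sub_nonneg.2 h)
    rw [abs_sub_comm, h3]
    calc |Real.exp (-b) - Real.exp (-a)| ≤ (a - b) * Real.exp (-b) := h1
      _ ≤ (a - b) * Real.exp (-m) := by nlinarith

end Helpers

/-- Paper's Lemma 3.1. -/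
theorem stmt6 {S : Type*} [MeasurableSpace S] (μ : Measure S) [SigmaFinite μ]
    (α : ℝ) (hα0 : 0 < α) (hα2 : α < 2) (f g : S → ℝ)
    (hf : MemLalpha α μ f) (hg : MemLalpha α μ g) (u v : ℝ) :
    |Ufun α μ f g u v| ≤ 2 * |u * v| ^ (α / 2) * dep2 α μ f g ∧
    |Ufun α μ f g u v| ≤ 2 * |u * v| ^ (α / 2) *
      Real.exp (-((|u| ^ (α / 2) * nrm α μ f ^ (α / 2) -
        |v| ^ (α / 2) * nrm α μ g ^ (α / 2)) ^ 2)) * dep2 α μ f g ∧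
    |Ufun α μ f g u v| ≤ 2 * |u * v| ^ (α / 2) *
      Real.exp (-(2 * (nrm α μ f ^ (α / 2) * nrm α μ g ^ (α / 2) - dep2 α μ f g) *
        |u * v| ^ (α / 2))) * dep2 α μ f g := by
  obtain ⟨hfm, hfi⟩ := hf
  obtain ⟨hgm, hgi⟩ := hg
  have hαne : α ≠ 0 := hα0.ne'
  have hp0 : (0:ℝ) < α / 2 := by positivity
  have hp1 : α / 2 ≤ 1 := by linarith
  -- measurability helpers
  have contp : Continuous (fun x : ℝ => x ^ (α / 2)) := Real.continuous_rpow_const hp0.le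
  have contα : Continuous (fun x : ℝ => x ^ α) := Real.continuous_rpow_const hα0.le
  have mabs : ∀ (h : S → ℝ), AEStronglyMeasurable h μ →
      AEStronglyMeasurable (fun s => |h s|) μ := by
    intro h hh
    simpa only [Real.norm_eq_abs] using hh.norm
  have mfg : AEStronglyMeasurable (fun s => |f s * g s| ^ (α / 2)) μ :=
    contp.comp_aestronglyMeasurable (mabs _ (hfm.mul hgm))
  have msum : AEStronglyMeasurable (fun s => |u * f s + v * g s| ^ α) μ :=
    contα.comp_aestronglyMeasurable (mabs _ ((hfm.const_mul u).add (hgm.const_mul v)))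
  -- abbreviations
  set F := ∫ s, |f s| ^ α ∂μ with hF
  set G := ∫ s, |g s| ^ α ∂μ with hG
  set A := ∫ s, |u * f s + v * g s| ^ α ∂μ with hA
  have hdep : dep2 α μ f g = ∫ s, |f s * g s| ^ (α / 2) ∂μ := rfl
  have hF0 : 0 ≤ F := integral_nonneg fun s => Real.rpow_nonneg (abs_nonneg _) _
  have hG0 : 0 ≤ G := integral_nonneg fun s => Real.rpow_nonneg (abs_nonneg _) _
  have hA0 : 0 ≤ A := integral_nonneg fun s => Real.rpow_nonneg (abs_nonneg _) _
  have hD0 : 0 ≤ dep2 α μ f g := by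
    rw [hdep]; exact integral_nonneg fun s => Real.rpow_nonneg (abs_nonneg _) _
  have ht0 : 0 ≤ |u * v| ^ (α / 2) := Real.rpow_nonneg (abs_nonneg _) _
  -- pointwise square identities
  have sqid : ∀ x : ℝ, 0 ≤ x → x ^ α = (x ^ (α / 2)) ^ 2 := by
    intro x hx
    rw [show α = α / 2 * 2 by ring, Real.rpow_mul hx, Real.rpow_two]; ring_nf
  -- AM-GM pointwise
  have amgm : ∀ x y : ℝ, |x * y| ^ (α / 2) ≤ (|x| ^ α + |y| ^ α) / 2 := by
    intro x y
    rw [abs_mul, Real.mul_rpow (abs_nonneg _) (abs_nonneg _),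
      sqid _ (abs_nonneg x), sqid _ (abs_nonneg y)]
    nlinarith [sq_nonneg (|x| ^ (α / 2) - |y| ^ (α / 2)),
      Real.rpow_nonneg (abs_nonneg x) (α / 2), Real.rpow_nonneg (abs_nonneg y) (α / 2)]
  -- integrability
  have integ_fg : Integrable (fun s => |f s * g s| ^ (α / 2)) μ := by
    refine Integrable.mono' ((hfi.add hgi).div_const 2) mfg ?_
    filter_upwards with s
    simp only [Pi.add_apply]
    rw [Real.norm_eq_abs, abs_of_nonneg (Real.rpow_nonneg (abs_nonneg _) _)]
    exact amgm (f s) (g s)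
  have habsmul : ∀ (c : ℝ) (h : S → ℝ),
      (fun s => |c * h s| ^ α) = fun s => |c| ^ α * |h s| ^ α := by
    intro c h; funext s
    rw [abs_mul, Real.mul_rpow (abs_nonneg _) (abs_nonneg _)]
  have integ_uf : Integrable (fun s => |u * f s| ^ α) μ := by
    rw [habsmul]; exact hfi.const_mul _
  have integ_vg : Integrable (fun s => |v * g s| ^ α) μ := by
    rw [habsmul]; exact hgi.const_mul _
  have eprod : ∀ s, |u * f s| ^ (α / 2) * |v * g s| ^ (α / 2)
      = |u * v| ^ (α / 2) * |f s * g s| ^ (α / 2) := by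
    intro s
    rw [← Real.mul_rpow (abs_nonneg _) (abs_nonneg _), ← abs_mul,
      show u * f s * (v * g s) = u * v * (f s * g s) by ring,
      abs_mul, Real.mul_rpow (abs_nonneg _) (abs_nonneg _)]
  have integ_sum : Integrable (fun s => |u * f s + v * g s| ^ α) μ := by
    refine Integrable.mono' ((integ_uf.add integ_vg).add (integ_fg.const_mul
      (2 * |u * v| ^ (α / 2)))) msum ?_
    filter_upwards with s
    simp only [Pi.add_apply]
    rw [Real.norm_eq_abs, abs_of_nonneg (Real.rpow_nonneg (abs_nonneg _) _)]
    have h := key_pointwise hα0 hα2.le (u * f s) (v * g s)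
    rw [Real.norm_eq_abs] at h
    have h2 := (abs_le.mp h).2
    rw [eprod s] at h2
    linarith
  -- nrm identities
  have hnrm_pow : ∀ h : S → ℝ, nrm α μ h ^ α = ∫ s, |h s| ^ α ∂μ := by
    intro h
    have h0 : 0 ≤ ∫ s, |h s| ^ α ∂μ := integral_nonneg fun s => Real.rpow_nonneg (abs_nonneg _) _
    rw [nrm, ← Real.rpow_mul h0, one_div, inv_mul_cancel₀ hαne, Real.rpow_one]
  have hhalf : ∀ h : S → ℝ, nrm α μ h ^ (α / 2) = (∫ s, |h s| ^ α ∂μ) ^ (1/2 : ℝ) := by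
    intro h
    have h0 : 0 ≤ ∫ s, |h s| ^ α ∂μ := integral_nonneg fun s => Real.rpow_nonneg (abs_nonneg _) _
    rw [nrm, ← Real.rpow_mul h0]
    congr 1
    field_simp
  have hufF : nrm α μ (fun s => u * f s) ^ α = |u| ^ α * F := by
    rw [hnrm_pow, habsmul u f, hF]
    exact integral_const_mul _ _
  have hvgG : nrm α μ (fun s => v * g s) ^ α = |v| ^ α * G := by
    rw [hnrm_pow, habsmul v g, hG]
    exact integral_const_mul _ _
  have hAeq : nrm α μ (fun s => u * f s + v * g s) ^ α = A := hnrm_pow _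
  -- Cauchy-Schwarz
  have hCS : dep2 α μ f g ≤ F ^ (1/2 : ℝ) * G ^ (1/2 : ℝ) := by
    have hconj : Real.HolderConjugate 2 2 := Real.holderConjugate_iff.mpr ⟨one_lt_two, by norm_num⟩
    have sq2 : ∀ h : S → ℝ, (fun s => (|h s| ^ (α / 2)) ^ (2:ℝ)) = fun s => |h s| ^ α := by
      intro h; funext s
      rw [← Real.rpow_mul (abs_nonneg _)]
      norm_num
    have hmf : MemLp (fun s => |f s| ^ (α / 2)) (ENNReal.ofReal 2) μ := by
      rw [show ENNReal.ofReal 2 = 2 by norm_num]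
      rw [memLp_two_iff_integrable_sq (contp.comp_aestronglyMeasurable (mabs _ hfm))]
      have e : (fun s => (|f s| ^ (α / 2)) ^ 2) = fun s => |f s| ^ α := by
        funext s
        rw [← Real.rpow_two, ← Real.rpow_mul (abs_nonneg _)]
        norm_num
      rw [e]; exact hfi
    have hmg : MemLp (fun s => |g s| ^ (α / 2)) (ENNReal.ofReal 2) μ := by
      rw [show ENNReal.ofReal 2 = 2 by norm_num]
      rw [memLp_two_iff_integrable_sq (contp.comp_aestronglyMeasurable (mabs _ hgm))]
      have e : (fun s => (|g s| ^ (α / 2)) ^ 2) = fun s => |g s| ^ α := by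
        funext s
        rw [← Real.rpow_two, ← Real.rpow_mul (abs_nonneg _)]
        norm_num
      rw [e]; exact hgi
    have h := integral_mul_le_Lp_mul_Lq_of_nonneg hconj
      (Filter.Eventually.of_forall fun s => Real.rpow_nonneg (abs_nonneg (f s)) _)
      (Filter.Eventually.of_forall fun s => Real.rpow_nonneg (abs_nonneg (g s)) _) hmf hmg
    rw [sq2 f, sq2 g] at h
    have e2 : (∫ s, |f s| ^ (α / 2) * |g s| ^ (α / 2) ∂μ) = dep2 α μ f g := by
      rw [hdep]
      refine integral_congr_ae (Filter.Eventually.of_forall fun s => ?_)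
      show |f s| ^ (α / 2) * |g s| ^ (α / 2) = |f s * g s| ^ (α / 2)
      rw [abs_mul, Real.mul_rpow (abs_nonneg _) (abs_nonneg _)]
    rw [e2] at h
    exact h
  -- bound on |A - B|
  have hABle : |A - (|u| ^ α * F + |v| ^ α * G)| ≤
      2 * |u * v| ^ (α / 2) * dep2 α μ f g := by
    have hB_int : |u| ^ α * F + |v| ^ α * G = ∫ s, (|u * f s| ^ α + |v * g s| ^ α) ∂μ := by
      rw [integral_add integ_uf integ_vg, habsmul u f, habsmul v g,
        integral_const_mul, integral_const_mul, hF, hG]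
    have h3 := integral_sub integ_sum (integ_uf.add integ_vg)
    simp only [Pi.add_apply] at h3
    have hsub : A - (|u| ^ α * F + |v| ^ α * G)
        = ∫ s, (|u * f s + v * g s| ^ α - (|u * f s| ^ α + |v * g s| ^ α)) ∂μ := by
      rw [hB_int, hA]
      exact h3.symm
    rw [hsub]
    have h1 : |∫ s, (|u * f s + v * g s| ^ α - (|u * f s| ^ α + |v * g s| ^ α)) ∂μ|
        ≤ ∫ s, |( |u * f s + v * g s| ^ α - (|u * f s| ^ α + |v * g s| ^ α))| ∂μ := by
      simpa only [Real.norm_eq_abs] using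
        norm_integral_le_integral_norm
          (fun s => |u * f s + v * g s| ^ α - (|u * f s| ^ α + |v * g s| ^ α)) (μ := μ)
    refine h1.trans ?_
    have h2 : (∫ s, |( |u * f s + v * g s| ^ α - (|u * f s| ^ α + |v * g s| ^ α))| ∂μ)
        ≤ ∫ s, 2 * |u * v| ^ (α / 2) * |f s * g s| ^ (α / 2) ∂μ := by
      refine integral_mono (integ_sum.sub (integ_uf.add integ_vg)).abs
        (integ_fg.const_mul _) fun s => ?_
      have h := key_pointwise hα0 hα2.le (u * f s) (v * g s)
      rw [Real.norm_eq_abs] at h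
      rw [eprod s] at h
      have e : |u * f s + v * g s| ^ α - (|u * f s| ^ α + |v * g s| ^ α)
          = |u * f s + v * g s| ^ α - |u * f s| ^ α - |v * g s| ^ α := by ring
      show |( |u * f s + v * g s| ^ α - (|u * f s| ^ α + |v * g s| ^ α))|
          ≤ 2 * |u * v| ^ (α / 2) * |f s * g s| ^ (α / 2)
      rw [e]
      calc _ ≤ 2 * (|u * v| ^ (α / 2) * |f s * g s| ^ (α / 2)) := h
        _ = 2 * |u * v| ^ (α / 2) * |f s * g s| ^ (α / 2) := by ring
    refine h2.trans ?_
    rw [hdep, integral_const_mul]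
  have hB0 : 0 ≤ |u| ^ α * F + |v| ^ α * G :=
    add_nonneg (mul_nonneg (Real.rpow_nonneg (abs_nonneg _) _) hF0)
      (mul_nonneg (Real.rpow_nonneg (abs_nonneg _) _) hG0)
  -- the generic bound
  have main : ∀ m : ℝ, m ≤ A → m ≤ |u| ^ α * F + |v| ^ α * G →
      |Ufun α μ f g u v| ≤ 2 * |u * v| ^ (α / 2) * Real.exp (-m) * dep2 α μ f g := by
    intro m hmA hmB
    have hU : Ufun α μ f g u v
        = Real.exp (-A) - Real.exp (-(|u| ^ α * F + |v| ^ α * G)) := by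
      rw [Ufun, hAeq, hufF, hvgG]
      congr 1
      ring
    rw [hU]
    calc |Real.exp (-A) - Real.exp (-(|u| ^ α * F + |v| ^ α * G))|
        ≤ |A - (|u| ^ α * F + |v| ^ α * G)| * Real.exp (-m) := exp_diff_le' _ _ m hmA hmB
      _ ≤ (2 * |u * v| ^ (α / 2) * dep2 α μ f g) * Real.exp (-m) :=
          mul_le_mul_of_nonneg_right hABle (Real.exp_pos _).le
      _ = 2 * |u * v| ^ (α / 2) * Real.exp (-m) * dep2 α μ f g := by ring
  -- square facts for X, Y
  have hXsq : (|u| ^ (α / 2) * F ^ (1/2 : ℝ)) ^ 2 = |u| ^ α * F := by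
    rw [mul_pow, ← sqid _ (abs_nonneg u), ← Real.rpow_two, ← Real.rpow_mul hF0]
    norm_num
  have hYsq : (|v| ^ (α / 2) * G ^ (1/2 : ℝ)) ^ 2 = |v| ^ α * G := by
    rw [mul_pow, ← sqid _ (abs_nonneg v), ← Real.rpow_two, ← Real.rpow_mul hG0]
    norm_num
  have hXYprod : (|u| ^ (α / 2) * F ^ (1/2 : ℝ)) * (|v| ^ (α / 2) * G ^ (1/2 : ℝ))
      = |u * v| ^ (α / 2) * (F ^ (1/2 : ℝ) * G ^ (1/2 : ℝ)) := by
    rw [abs_mul, Real.mul_rpow (abs_nonneg _) (abs_nonneg _)]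
    ring
  have hX0' : 0 ≤ |u| ^ (α / 2) * F ^ (1/2 : ℝ) :=
    mul_nonneg (Real.rpow_nonneg (abs_nonneg _) _) (Real.rpow_nonneg hF0 _)
  have hY0' : 0 ≤ |v| ^ (α / 2) * G ^ (1/2 : ℝ) :=
    mul_nonneg (Real.rpow_nonneg (abs_nonneg _) _) (Real.rpow_nonneg hG0 _)
  have hAB' : (|u| ^ α * F + |v| ^ α * G) - A ≤ 2 * |u * v| ^ (α / 2) * dep2 α μ f g := by
    have := (abs_le.mp hABle).1
    linarith
  have htD : |u * v| ^ (α / 2) * dep2 α μ f g ≤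
      |u * v| ^ (α / 2) * (F ^ (1/2 : ℝ) * G ^ (1/2 : ℝ)) :=
    mul_le_mul_of_nonneg_left hCS ht0
  refine ⟨?_, ?_, ?_⟩
  · have h := main 0 hA0 hB0
    simpa using h
  · rw [hhalf f, hhalf g]
    refine main _ ?_ ?_
    · linarith [hAB', hXsq, hYsq, hXYprod, htD,
        sq_nonneg (|u| ^ (α / 2) * F ^ (1/2 : ℝ) - |v| ^ (α / 2) * G ^ (1/2 : ℝ))]
    · linarith [hXsq, hYsq, mul_nonneg hX0' hY0']
  · rw [hhalf f, hhalf g]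
    refine main _ ?_ ?_
    · linarith [hAB', hXsq, hYsq, hXYprod,
        sq_nonneg (|u| ^ (α / 2) * F ^ (1/2 : ℝ) - |v| ^ (α / 2) * G ^ (1/2 : ℝ))]
    · linarith [hXsq, hYsq, hXYprod, mul_nonneg ht0 hD0,
        sq_nonneg (|u| ^ (α / 2) * F ^ (1/2 : ℝ) - |v| ^ (α / 2) * G ^ (1/2 : ℝ))]
end

section
/- Let α ∈ (1,2), let (S, μ) be a σ-finite measure space and f, g ∈ L^α(S, μ), and set F(u,v) := ∫_S |u f(s) + v g(s)|^α μ(ds) for u, v ∈ ℝ. Then for all u, v ∈ ℝ, the partial derivative ∂F/∂u(u,v) exists and equals α ∫_S (uf + vg)^⟨α−1⟩ f dμ. Moreover, at every (u,v) for which ∫_S |uf + vg|^{α−2}|f||g| dμ < ∞ (with the convention that the integrand is 0 at points where f(s) = 0 or g(s) = 0), the mixed partial derivative ∂²F/(∂v∂u)(u,v) exists and equals α(α−1) ∫_S |uf + vg|^{α−2} fg dμ. (Paper's Lemma 5.1.) -/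
open MeasureTheory Real Set Filter
open scoped ENNReal Topology

section AuxLemmas
open Metric

lemma spow_of_pos {a : ℝ} (h : 0 < a) (p : ℝ) : spow a p = a ^ p := by
  rw [spow, Real.sign_of_pos h, abs_of_pos h, one_mul]

lemma spow_of_neg {a : ℝ} (h : a < 0) (p : ℝ) : spow a p = -((-a) ^ p) := by
  rw [spow, Real.sign_of_neg h, abs_of_neg h]; ring

lemma spow_zero' (p : ℝ) : spow 0 p = 0 := by simp [spow, Real.sign_zero]

lemma spow_eq_mul (p a : ℝ) : spow a p = a * |a| ^ p * |a|⁻¹ := by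
  rcases lt_trichotomy a 0 with h | h | h
  · rw [spow_of_neg h, abs_of_neg h, mul_comm a, mul_assoc,
      show a * (-a)⁻¹ = -1 by rw [inv_neg, mul_neg, mul_inv_cancel₀ h.ne], mul_neg_one]
  · simp [h, spow_zero']
  · rw [spow_of_pos h, abs_of_pos h, mul_comm a, mul_assoc, mul_inv_cancel₀ h.ne', mul_one]

lemma abs_spow {p : ℝ} (hp : p ≠ 0) (a : ℝ) : |spow a p| = |a| ^ p := by
  rcases eq_or_ne a 0 with rfl | h
  · simp [spow_zero', Real.zero_rpow hp]
  · rw [spow, abs_mul, abs_of_nonneg (Real.rpow_nonneg (abs_nonneg a) p)]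
    rcases Real.sign_apply_eq_of_ne_zero a h with h1 | h1 <;> rw [h1] <;> norm_num

lemma measurable_spow {p : ℝ} (hp : 0 ≤ p) : Measurable fun a : ℝ => spow a p := by
  simp only [spow_eq_mul p]
  exact ((measurable_id.mul
    (continuous_abs.rpow_const (fun a => Or.inr hp)).measurable).mul measurable_abs.inv)

lemma hasDerivAt_spow {p x : ℝ} (hx : x ≠ 0) :
    HasDerivAt (fun y => spow y p) (p * |x| ^ (p - 1)) x := by
  rcases hx.lt_or_gt with h | h
  · have hev : (fun y : ℝ => spow y p) =ᶠ[𝓝 x] fun y => -((-y) ^ p) := by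
      filter_upwards [Iio_mem_nhds h] with y hy
      rw [spow_of_neg hy]
    have h1 : HasDerivAt (fun y : ℝ => (-y) ^ p) (p * (-x) ^ (p - 1) * (-1)) x :=
      (Real.hasDerivAt_rpow_const (p := p) (Or.inl (neg_ne_zero.2 hx))).comp x (hasDerivAt_neg x)
    have h2 := h1.neg
    have h3 := h2.congr_of_eventuallyEq hev
    refine h3.congr_deriv ?_
    rw [abs_of_neg h]; ring
  · have hev : (fun y : ℝ => spow y p) =ᶠ[𝓝 x] fun y => y ^ p := by
      filter_upwards [Ioi_mem_nhds h] with y hy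
      rw [spow_of_pos hy]
    have h1 : HasDerivAt (fun y : ℝ => y ^ p) (p * x ^ (p - 1)) x :=
      Real.hasDerivAt_rpow_const (Or.inl hx)
    have h3 := h1.congr_of_eventuallyEq hev
    refine h3.congr_deriv ?_
    rw [abs_of_pos h]

lemma spow_eq_abs_mul (x q : ℝ) : spow x q = |x| ^ (q - 1) * x := by
  rcases lt_trichotomy x 0 with h | h | h
  · rw [spow_of_neg h, abs_of_neg h]
    rw [show (q : ℝ) = (q - 1) + 1 by ring, Real.rpow_add_one (by linarith : -x ≠ 0)]
    ring_nf
  · simp [h, spow_zero']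
  · rw [spow_of_pos h, abs_of_pos h]
    rw [show (q : ℝ) = (q - 1) + 1 by ring, Real.rpow_add_one (by linarith : x ≠ 0)]
    ring_nf

lemma hasDerivAt_abs_rpow' {p : ℝ} (hp : 1 < p) (x : ℝ) :
    HasDerivAt (fun y => |y| ^ p) (p * spow x (p - 1)) x := by
  have := hasDerivAt_abs_rpow x hp
  convert this using 1
  rw [spow_eq_abs_mul]
  ring_nf

lemma half_rpow_le {x p : ℝ} (hx : x ≠ 0) (hp0 : 0 < p) (hp : p < 1) :
    (|x| / 2) ^ (p - 1) ≤ 2 * |x| ^ (p - 1) := by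
  have hx0 : (0:ℝ) < |x| := abs_pos.2 hx
  rw [Real.div_rpow hx0.le (by norm_num)]
  rw [div_le_iff₀ (by positivity : (0:ℝ) < (2:ℝ) ^ (p - 1))]
  have h2 : ((2:ℝ)) ^ (-1 : ℝ) ≤ (2:ℝ) ^ (p - 1) :=
    Real.rpow_le_rpow_of_exponent_le (by norm_num) (by linarith)
  have h2' : ((2:ℝ)) ^ (-1 : ℝ) = 1/2 := by
    rw [Real.rpow_neg_one]; norm_num
  calc |x| ^ (p - 1) = (2 * |x| ^ (p - 1)) * (1/2) := by ring
    _ ≤ 2 * |x| ^ (p - 1) * 2 ^ (p - 1) := by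
        apply mul_le_mul_of_nonneg_left (h2' ▸ h2) (by positivity)

lemma spow_diff_le {p : ℝ} (hp0 : 0 < p) (hp1 : p < 1) {x : ℝ} (hx : x ≠ 0) (h : ℝ) :
    |spow (x + h) p - spow x p| ≤ 10 * (|x| ^ (p - 1) * |h|) := by
  have hx0 : (0:ℝ) < |x| := abs_pos.2 hx
  have hhalf := half_rpow_le hx hp0 hp1
  have hrnn : (0:ℝ) ≤ |x| ^ (p - 1) := Real.rpow_nonneg hx0.le _
  rcases le_or_gt |h| (|x| / 2) with hc | hc
  · -- MVT case
    have hmem : ∀ y ∈ uIcc x (x + h), |x| / 2 ≤ |y| := by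
      intro y hy
      have h1 : dist y x ≤ dist x (x + h) :=
        Real.dist_le_of_mem_uIcc hy (left_mem_uIcc)
      have h2 : |y - x| ≤ |h| := by
        simpa [Real.dist_eq, abs_sub_comm] using h1
      have := abs_sub_abs_le_abs_sub x y
      have h3 : |x - y| ≤ |h| := by rwa [abs_sub_comm]
      linarith
    have hne : ∀ y ∈ uIcc x (x + h), y ≠ 0 := by
      intro y hy hy0
      have := hmem y hy
      rw [hy0, abs_zero] at this
      linarith
    have hC : ∀ y ∈ uIcc x (x + h),
        ‖p * |y| ^ (p - 1)‖ ≤ p * (|x| / 2) ^ (p - 1) := by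
      intro y hy
      have h1 : |y| ^ (p - 1) ≤ (|x| / 2) ^ (p - 1) :=
        Real.rpow_le_rpow_of_nonpos (by linarith [hx0]) (hmem y hy) (by linarith)
      have h2 : (0:ℝ) ≤ |y| ^ (p - 1) := Real.rpow_nonneg (abs_nonneg y) _
      rw [Real.norm_eq_abs, abs_of_nonneg (by positivity)]
      exact mul_le_mul_of_nonneg_left h1 hp0.le
    have hmvt := (convex_uIcc x (x + h)).norm_image_sub_le_of_norm_hasDerivWithin_le
      (f := fun z => spow z p) (f' := fun y => p * |y| ^ (p - 1))
      (fun y hy => (hasDerivAt_spow (hne y hy)).hasDerivWithinAt) hC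
      left_mem_uIcc right_mem_uIcc
    rw [Real.norm_eq_abs, Real.norm_eq_abs] at hmvt
    simp only [add_sub_cancel_left] at hmvt
    calc |spow (x + h) p - spow x p| ≤ p * (|x| / 2) ^ (p - 1) * |h| := hmvt
      _ ≤ 1 * (2 * |x| ^ (p - 1)) * |h| := by
          apply mul_le_mul_of_nonneg_right _ (abs_nonneg h)
          rw [one_mul]
          calc p * (|x| / 2) ^ (p - 1) ≤ 1 * (|x| / 2) ^ (p - 1) :=
                mul_le_mul_of_nonneg_right (by linarith) (by positivity)
            _ = (|x| / 2) ^ (p - 1) := one_mul _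
            _ ≤ 2 * |x| ^ (p - 1) := hhalf
      _ ≤ 10 * (|x| ^ (p - 1) * |h|) := by nlinarith [abs_nonneg h]
  · -- crossing case
    have hh0 : (0:ℝ) < |h| := by linarith
    have e1 : |spow (x + h) p - spow x p| ≤ |x + h| ^ p + |x| ^ p := by
      calc |spow (x + h) p - spow x p| ≤ |spow (x + h) p| + |spow x p| := abs_sub _ _
        _ = |x + h| ^ p + |x| ^ p := by
            rw [abs_spow hp0.ne' , abs_spow hp0.ne']
    have e2 : |x + h| ^ p ≤ 3 * |h| ^ p := by
      calc |x + h| ^ p ≤ (3 * |h|) ^ p := by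
            apply Real.rpow_le_rpow (abs_nonneg _) _ hp0.le
            calc |x + h| ≤ |x| + |h| := abs_add_le x h
              _ ≤ 3 * |h| := by linarith
        _ = 3 ^ p * |h| ^ p := Real.mul_rpow (by norm_num) (abs_nonneg h)
        _ ≤ 3 * |h| ^ p := by
            apply mul_le_mul_of_nonneg_right _ (Real.rpow_nonneg (abs_nonneg h) _)
            calc (3:ℝ) ^ p ≤ 3 ^ (1:ℝ) :=
                  Real.rpow_le_rpow_of_exponent_le (by norm_num) hp1.le
              _ = 3 := Real.rpow_one 3
    have e3 : |x| ^ p ≤ 2 * |h| ^ p := by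
      calc |x| ^ p ≤ (2 * |h|) ^ p := by
            apply Real.rpow_le_rpow (abs_nonneg _) (by linarith) hp0.le
        _ = 2 ^ p * |h| ^ p := Real.mul_rpow (by norm_num) (abs_nonneg h)
        _ ≤ 2 * |h| ^ p := by
            apply mul_le_mul_of_nonneg_right _ (Real.rpow_nonneg (abs_nonneg h) _)
            calc (2:ℝ) ^ p ≤ 2 ^ (1:ℝ) :=
                  Real.rpow_le_rpow_of_exponent_le (by norm_num) hp1.le
              _ = 2 := Real.rpow_one 2
    have e4 : |h| ^ p = |h| ^ (p - 1) * |h| := by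
      rw [← Real.rpow_add_one hh0.ne' (p - 1)]; ring_nf
    have e5 : |h| ^ (p - 1) ≤ 2 * |x| ^ (p - 1) := by
      calc |h| ^ (p - 1) ≤ (|x| / 2) ^ (p - 1) :=
            Real.rpow_le_rpow_of_nonpos (by linarith) hc.le (by linarith)
        _ ≤ 2 * |x| ^ (p - 1) := hhalf
    calc |spow (x + h) p - spow x p| ≤ |x + h| ^ p + |x| ^ p := e1
      _ ≤ 5 * |h| ^ p := by linarith
      _ = 5 * (|h| ^ (p - 1) * |h|) := by rw [e4]
      _ ≤ 5 * (2 * |x| ^ (p - 1) * |h|) := by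
          apply mul_le_mul_of_nonneg_left _ (by norm_num)
          exact mul_le_mul_of_nonneg_right e5 (abs_nonneg h)
      _ = 10 * (|x| ^ (p - 1) * |h|) := by ring

lemma two_rpow_add_le {a b q : ℝ} (ha : 0 ≤ a) (hb : 0 ≤ b) (hq : 0 ≤ q) :
    (a + b) ^ q ≤ 2 ^ q * (a ^ q + b ^ q) := by
  have h1 : a + b ≤ 2 * max a b := by
    rcases le_total a b with h | h <;> simp [max_eq_right, max_eq_left, h] <;> linarith
  calc (a + b) ^ q ≤ (2 * max a b) ^ q :=
        Real.rpow_le_rpow (by linarith) h1 hq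
    _ = 2 ^ q * (max a b) ^ q := Real.mul_rpow (by norm_num) (le_max_iff.2 (Or.inl ha))
    _ ≤ 2 ^ q * (a ^ q + b ^ q) := by
        apply mul_le_mul_of_nonneg_left _ (Real.rpow_nonneg (by norm_num) q)
        rcases le_total a b with h | h
        · rw [max_eq_right h]
          exact le_add_of_nonneg_left (Real.rpow_nonneg ha q)
        · rw [max_eq_left h]
          exact le_add_of_nonneg_right (Real.rpow_nonneg hb q)


section S
variable {S : Type*} [MeasurableSpace S] {μ : Measure S} {α : ℝ} {f g : S → ℝ}

lemma int_pow (hα1 : 1 < α) (hf : MemLalpha α μ f) (hg : MemLalpha α μ g)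
    {c d : ℝ} (hc : 0 ≤ c) (hd : 0 ≤ d) :
    Integrable (fun s => (c * |f s| + d * |g s|) ^ α) μ := by
  have hα0 : (0:ℝ) ≤ α := by linarith
  have hmeas : AEStronglyMeasurable (fun s => (c * |f s| + d * |g s|) ^ α) μ := by
    apply ((Real.continuous_rpow_const hα0).comp_aestronglyMeasurable)
    exact (((continuous_abs.comp_aestronglyMeasurable hf.1).const_mul c).add
      ((continuous_abs.comp_aestronglyMeasurable hg.1).const_mul d))
  have hbig : Integrable (fun s => 2 ^ α * (c ^ α * |f s| ^ α + d ^ α * |g s| ^ α)) μ :=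
    (((hf.2.const_mul (c ^ α)).add (hg.2.const_mul (d ^ α))).const_mul (2 ^ α))
  apply hbig.mono hmeas
  filter_upwards with s
  rw [Real.norm_eq_abs, Real.norm_eq_abs,
    abs_of_nonneg (Real.rpow_nonneg (by positivity) α)]
  have h1 := two_rpow_add_le (a := c * |f s|) (b := d * |g s|)
    (by positivity) (by positivity) hα0
  rw [Real.mul_rpow hc (abs_nonneg _), Real.mul_rpow hd (abs_nonneg _)] at h1
  refine h1.trans (le_abs_self _)

lemma rpow_sub_one_mul {A : ℝ} (hA : 0 ≤ A) (hα1 : 1 < α) : A ^ (α - 1) * A = A ^ α := by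
  rcases eq_or_lt_of_le hA with h | h
  · rw [← h, Real.zero_rpow (by linarith), Real.zero_rpow (by linarith), zero_mul]
  · rw [← Real.rpow_add_one h.ne' (α - 1)]; ring_nf

lemma aesm_spow_mul (hα1 : 1 < α) (hf : AEStronglyMeasurable f μ)
    (hg : AEStronglyMeasurable g μ) (a b : ℝ) :
    AEStronglyMeasurable (fun s => spow (a * f s + b * g s) (α - 1) * f s) μ := by
  have h1 : AEMeasurable (fun s => a * f s + b * g s) μ :=
    (hf.aemeasurable.const_mul a).add (hg.aemeasurable.const_mul b)
  exact (((measurable_spow (by linarith : (0:ℝ) ≤ α - 1)).comp_aemeasurable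
    h1).aestronglyMeasurable).mul hf

lemma int_spow_mul (hα1 : 1 < α) (hf : MemLalpha α μ f) (hg : MemLalpha α μ g) (a b : ℝ) :
    Integrable (fun s => spow (a * f s + b * g s) (α - 1) * f s) μ := by
  set A : S → ℝ := fun s => (|a| + 1) * |f s| + |b| * |g s| with hA
  have hAnn : ∀ s, 0 ≤ A s := fun s => by positivity
  have hint : Integrable (fun s => A s ^ α) μ :=
    int_pow hα1 hf hg (by positivity) (abs_nonneg b)
  apply hint.mono (aesm_spow_mul hα1 hf.1 hg.1 a b)
  filter_upwards with s
  rw [Real.norm_eq_abs, Real.norm_eq_abs, abs_mul,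
    abs_spow (by linarith : α - 1 ≠ 0)]
  have h1 : |a * f s + b * g s| ≤ A s := by
    calc |a * f s + b * g s| ≤ |a| * |f s| + |b| * |g s| := by
          rw [← abs_mul, ← abs_mul]; exact abs_add_le _ _
      _ ≤ A s := by simp only [hA]; nlinarith [abs_nonneg (f s)]
  have h2 : |f s| ≤ A s := by
    simp only [hA]; nlinarith [abs_nonneg (f s), abs_nonneg a, abs_nonneg b, abs_nonneg (g s)]
  calc |a * f s + b * g s| ^ (α - 1) * |f s| ≤ A s ^ (α - 1) * A s := by
        apply mul_le_mul _ h2 (abs_nonneg _) (Real.rpow_nonneg (hAnn s) _)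
        exact Real.rpow_le_rpow (abs_nonneg _) h1 (by linarith)
    _ = A s ^ α := rpow_sub_one_mul (hAnn s) hα1
    _ ≤ |A s ^ α| := le_abs_self _

lemma part1 (hα1 : 1 < α) (hα2 : α < 2) (hf : MemLalpha α μ f) (hg : MemLalpha α μ g)
    (u v : ℝ) :
    HasDerivAt (fun u' => ∫ s, |u' * f s + v * g s| ^ α ∂μ)
      (α * ∫ s, spow (u * f s + v * g s) (α - 1) * f s ∂μ) u := by
  have hα0 : (0:ℝ) ≤ α := by linarith
  set A : S → ℝ := fun s => (|u| + 1) * |f s| + |v| * |g s| with hA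
  have hAnn : ∀ s, 0 ≤ A s := fun s => by positivity
  have key := hasDerivAt_integral_of_dominated_loc_of_deriv_le
    (μ := μ) (x₀ := u) (s := ball u 1) (ball_mem_nhds u one_pos)
    (F := fun u' s => |u' * f s + v * g s| ^ α)
    (F' := fun u' s => α * (spow (u' * f s + v * g s) (α - 1) * f s))
    (bound := fun s => α * A s ^ α)
    ?_ ?_ ?_ ?_ ?_ ?_
  · rw [MeasureTheory.integral_const_mul] at key
    exact key.2
  · -- hF_meas
    refine Eventually.of_forall (fun u' => ?_)
    apply (Real.continuous_rpow_const hα0).comp_aestronglyMeasurable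
    exact continuous_abs.comp_aestronglyMeasurable
      ((hf.1.const_smul u').add (hg.1.const_smul v))
  · -- hF_int
    have hint : Integrable (fun s => (|u| * |f s| + |v| * |g s|) ^ α) μ :=
      int_pow hα1 hf hg (abs_nonneg u) (abs_nonneg v)
    apply hint.mono
    · apply (Real.continuous_rpow_const hα0).comp_aestronglyMeasurable
      exact continuous_abs.comp_aestronglyMeasurable
        ((hf.1.const_smul u).add (hg.1.const_smul v))
    · filter_upwards with s
      rw [Real.norm_eq_abs, Real.norm_eq_abs,
        abs_of_nonneg (Real.rpow_nonneg (abs_nonneg _) α)]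
      refine (Real.rpow_le_rpow (abs_nonneg _) ?_ hα0).trans (le_abs_self _)
      calc |u * f s + v * g s| ≤ |u * f s| + |v * g s| := abs_add_le _ _
        _ = |u| * |f s| + |v| * |g s| := by rw [abs_mul, abs_mul]
  · -- hF'_meas
    exact (aesm_spow_mul hα1 hf.1 hg.1 u v).const_mul α
  · -- h_bound
    refine Eventually.of_forall (fun s => fun u' hu' => ?_)
    have hu'le : |u'| ≤ |u| + 1 := by
      have := mem_ball_iff_norm.1 hu'
      rw [Real.norm_eq_abs] at this
      calc |u'| = |u + (u' - u)| := by ring_nf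
        _ ≤ |u| + |u' - u| := abs_add_le _ _
        _ ≤ |u| + 1 := by linarith
    rw [Real.norm_eq_abs, abs_mul, abs_of_nonneg hα0, abs_mul,
      abs_spow (by linarith : α - 1 ≠ 0)]
    apply mul_le_mul_of_nonneg_left _ hα0
    have h1 : |u' * f s + v * g s| ≤ A s := by
      calc |u' * f s + v * g s| ≤ |u'| * |f s| + |v| * |g s| := by
            rw [← abs_mul, ← abs_mul]; exact abs_add_le _ _
        _ ≤ A s := by
            simp only [hA]
            have := abs_nonneg (f s)
            nlinarith
    have h2 : |f s| ≤ A s := by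
      simp only [hA]
      nlinarith [abs_nonneg (f s), abs_nonneg u, abs_nonneg v, abs_nonneg (g s)]
    calc |u' * f s + v * g s| ^ (α - 1) * |f s| ≤ A s ^ (α - 1) * A s := by
          apply mul_le_mul _ h2 (abs_nonneg _) (Real.rpow_nonneg (hAnn s) _)
          exact Real.rpow_le_rpow (abs_nonneg _) h1 (by linarith)
      _ = A s ^ α := rpow_sub_one_mul (hAnn s) hα1
  · -- bound integrable
    exact (int_pow hα1 hf hg (by positivity) (abs_nonneg v)).const_mul α
  · -- h_diff
    refine Eventually.of_forall (fun s => fun u' _ => ?_)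
    have hinner : HasDerivAt (fun u' : ℝ => u' * f s + v * g s) (f s) u' :=
      (hasDerivAt_mul_const (f s)).add_const (v * g s)
    have houter := (hasDerivAt_abs_rpow' hα1 (u' * f s + v * g s)).comp u' hinner
    refine houter.congr_deriv ?_
    ring

lemma part2 (hα1 : 1 < α) (hα2 : α < 2) (hf : MemLalpha α μ f) (hg : MemLalpha α μ g)
    (u v : ℝ)
    (hfin : (∫⁻ s, (if f s = 0 ∨ g s = 0 then (0:ℝ≥0∞) else
        (ENNReal.ofReal |u * f s + v * g s|) ^ (α - 2) *
          ENNReal.ofReal (|f s| * |g s|)) ∂μ) < ⊤) :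
    HasDerivAt (fun v' => α * ∫ s, spow (u * f s + v' * g s) (α - 1) * f s ∂μ)
      (α * (α - 1) * ∫ s, (if f s = 0 ∨ g s = 0 then (0:ℝ) else
        |u * f s + v * g s| ^ (α - 2) * (f s * g s)) ∂μ) v := by
  have hp0 : (0:ℝ) < α - 1 := by linarith
  have hp1 : α - 1 < 1 := by linarith
  set x : S → ℝ := fun s => u * f s + v * g s with hxdef
  set H : S → ℝ≥0∞ := fun s => if f s = 0 ∨ g s = 0 then (0:ℝ≥0∞) else
      (ENNReal.ofReal |u * f s + v * g s|) ^ (α - 2) * ENNReal.ofReal (|f s| * |g s|) with hHdef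
  -- if-elimination for the real integrand
  have hifr : ∀ s, (if f s = 0 ∨ g s = 0 then (0:ℝ) else
      |u * f s + v * g s| ^ (α - 2) * (f s * g s)) = |x s| ^ (α - 2) * (f s * g s) := by
    intro s
    split_ifs with h
    · rcases h with h | h <;> simp [hxdef, h]
    · rfl
  -- AEMeasurable of H
  have hHmeas : AEMeasurable H μ := by
    set fm := hf.1.aemeasurable.mk f with hfm
    set gm := hg.1.aemeasurable.mk g with hgm
    have hfmm : Measurable fm := hf.1.aemeasurable.measurable_mk
    have hgmm : Measurable gm := hg.1.aemeasurable.measurable_mk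
    set H' : S → ℝ≥0∞ := fun s => if fm s = 0 ∨ gm s = 0 then (0:ℝ≥0∞) else
        (ENNReal.ofReal |u * fm s + v * gm s|) ^ (α - 2) *
          ENNReal.ofReal (|fm s| * |gm s|) with hH'def
    have hH'm : Measurable H' := by
      apply Measurable.ite
      · exact ((hfmm (measurableSet_singleton 0)).union (hgmm (measurableSet_singleton 0)))
      · exact measurable_const
      · apply Measurable.mul
        · exact (((hfmm.const_mul u).add (hgmm.const_mul v)).abs.ennreal_ofReal).pow_const _
        · exact (hfmm.abs.mul hgmm.abs).ennreal_ofReal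
    apply hH'm.aemeasurable.congr
    filter_upwards [hf.1.aemeasurable.ae_eq_mk, hg.1.aemeasurable.ae_eq_mk] with s hfs hgs
    simp only [hHdef, hH'def, hfm, hgm, ← hfs, ← hgs]
  -- a.e. nonvanishing on {f ≠ 0, g ≠ 0}
  have haeH := ae_lt_top' hHmeas hfin.ne
  have hae : ∀ᵐ s ∂μ, f s ≠ 0 → g s ≠ 0 → x s ≠ 0 := by
    filter_upwards [haeH] with s hs hfs hgs hx0
    rw [hHdef] at hs
    simp only [hfs, hgs, or_self, if_false] at hs
    have hx0' : u * f s + v * g s = 0 := hx0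
    rw [hx0'] at hs
    simp only [abs_zero, ENNReal.ofReal_zero] at hs
    rw [ENNReal.zero_rpow_of_neg (by linarith)] at hs
    rw [ENNReal.top_mul] at hs
    · exact absurd hs (lt_irrefl ⊤)
    · simp only [ne_eq, ENNReal.ofReal_eq_zero, not_le]
      positivity
  -- the dominating function
  set bound : S → ℝ := fun s => 10 * (|x s| ^ (α - 2) * (|f s| * |g s|)) with hbdef
  have hbnn : ∀ s, 0 ≤ bound s := fun s => by positivity
  have hxmeas : AEMeasurable x μ :=
    (hf.1.aemeasurable.const_mul u).add (hg.1.aemeasurable.const_mul v)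
  have hbmeas : AEStronglyMeasurable bound μ := by
    apply AEMeasurable.aestronglyMeasurable
    exact ((((measurable_abs.comp_aemeasurable hxmeas).pow_const (α - 2)).mul
      ((measurable_abs.comp_aemeasurable hf.1.aemeasurable).mul
        (measurable_abs.comp_aemeasurable hg.1.aemeasurable))).const_mul 10)
  have hbint : Integrable bound μ := by
    refine ⟨hbmeas, ?_⟩
    show (∫⁻ s, (‖bound s‖₊ : ℝ≥0∞) ∂μ) < ⊤
    have hle : ∀ s, (‖bound s‖₊ : ℝ≥0∞) ≤ 10 * H s := by
      intro s
      by_cases hcase : f s = 0 ∨ g s = 0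
      · have : bound s = 0 := by
          rcases hcase with h | h <;> simp [hbdef, h]
        simp [this]
      · push_neg at hcase
        rw [hHdef]
        simp only [if_neg (not_or.2 ⟨hcase.1, hcase.2⟩)]
        by_cases hx0 : x s = 0
        · have hx0' : u * f s + v * g s = 0 := hx0
          have hfg : (0:ℝ) < |f s| * |g s| :=
            mul_pos (abs_pos.2 hcase.1) (abs_pos.2 hcase.2)
          rw [hx0']
          simp only [abs_zero, ENNReal.ofReal_zero]
          rw [ENNReal.zero_rpow_of_neg (by linarith), ENNReal.top_mul
            (by simp only [ne_eq, ENNReal.ofReal_eq_zero, not_le]; exact hfg),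
            ENNReal.mul_top (by norm_num)]
          exact le_top
        · have hx0' : u * f s + v * g s ≠ 0 := hx0
          rw [← enorm_eq_nnnorm, enorm_eq_ofReal (hbnn s)]
          simp only [hbdef, hxdef]
          rw [ENNReal.ofReal_mul (by norm_num : (0:ℝ) ≤ 10),
            ENNReal.ofReal_mul (Real.rpow_nonneg (abs_nonneg _) _),
            ENNReal.ofReal_rpow_of_pos (abs_pos.2 hx0'),
            ENNReal.ofReal_ofNat]
    calc ∫⁻ s, (‖bound s‖₊ : ℝ≥0∞) ∂μ ≤ ∫⁻ s, 10 * H s ∂μ := lintegral_mono hle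
      _ = 10 * ∫⁻ s, H s ∂μ := lintegral_const_mul' _ _ (by norm_num)
      _ < ⊤ := ENNReal.mul_lt_top (by norm_num) hfin
  -- integrability of each φ v'
  have hφint : ∀ v' : ℝ, Integrable (fun s => spow (u * f s + v' * g s) (α - 1) * f s) μ :=
    fun v' => int_spow_mul hα1 hf hg u v'
  -- a.e. pointwise derivative
  have hderiv : ∀ᵐ s ∂μ, HasDerivAt (fun v' => spow (u * f s + v' * g s) (α - 1) * f s)
      (|x s| ^ (α - 2) * (f s * g s) * (α - 1)) v := by
    filter_upwards [hae] with s hs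
    by_cases hgs : g s = 0
    · simp only [hxdef, hgs, mul_zero, add_zero, zero_mul]
      exact hasDerivAt_const v _
    by_cases hfs : f s = 0
    · simp only [hxdef, hfs, mul_zero, zero_mul, mul_zero]
      exact hasDerivAt_const v _
    · have hx0 : u * f s + v * g s ≠ 0 := hs hfs hgs
      have hinner : HasDerivAt (fun v' : ℝ => u * f s + v' * g s) (g s) v :=
        (hasDerivAt_mul_const (g s)).const_add (u * f s)
      have houter := ((hasDerivAt_spow (p := α - 1) hx0).comp v hinner).mul_const (f s)
      simp only [Function.comp] at houter
      refine houter.congr_deriv ?_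
      rw [hxdef, show α - 1 - 1 = α - 2 by ring]
      ring
  -- slope functions
  set Fq : ℝ → S → ℝ := fun v' s =>
    (spow (u * f s + v' * g s) (α - 1) * f s - spow (u * f s + v * g s) (α - 1) * f s)
      / (v' - v) with hFqdef
  have h_bound : ∀ v' : ℝ, ∀ᵐ s ∂μ, ‖Fq v' s‖ ≤ bound s := by
    intro v'
    filter_upwards [hae] with s hs
    by_cases hv' : v' = v
    · simp only [hFqdef, hv', sub_self, zero_div, norm_zero]
      exact hbnn s
    by_cases hgs : g s = 0
    · simp only [hFqdef, hgs, mul_zero, add_zero, sub_self, zero_div, norm_zero]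
      exact hbnn s
    by_cases hfs : f s = 0
    · simp only [hFqdef, hfs, mul_zero, sub_self, zero_div, norm_zero]
      exact hbnn s
    · have hx0 : u * f s + v * g s ≠ 0 := hs hfs hgs
      have hxrw : u * f s + v' * g s = (u * f s + v * g s) + (v' - v) * g s := by ring
      have key := spow_diff_le hp0 hp1 hx0 ((v' - v) * g s)
      have hvpos : (0:ℝ) < |v' - v| := abs_pos.2 (sub_ne_zero.2 hv')
      rw [hFqdef]
      simp only [Real.norm_eq_abs]
      rw [hxrw, ← sub_mul, abs_div, abs_mul, div_le_iff₀ hvpos]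
      have key2 := mul_le_mul_of_nonneg_right key (abs_nonneg (f s))
      rw [abs_mul] at key2
      calc |spow (u * f s + v * g s + (v' - v) * g s) (α - 1)
            - spow (u * f s + v * g s) (α - 1)| * |f s|
          ≤ 10 * (|u * f s + v * g s| ^ (α - 1 - 1) * (|v' - v| * |g s|)) * |f s| := key2
        _ = bound s * |v' - v| := by
            rw [hbdef, hxdef, show α - 1 - 1 = α - 2 by ring]
            ring
  have h_lim : ∀ᵐ s ∂μ, Tendsto (fun v' => Fq v' s) (𝓝[≠] v)
      (𝓝 (|x s| ^ (α - 2) * (f s * g s) * (α - 1))) := by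
    filter_upwards [hderiv] with s hd
    have := hasDerivAt_iff_tendsto_slope.1 hd
    refine this.congr (fun v' => ?_)
    rw [slope_def_field, hFqdef]
  have hF_meas : ∀ᶠ v' in 𝓝[≠] v, AEStronglyMeasurable (Fq v') μ := by
    refine Eventually.of_forall (fun v' => ?_)
    exact (((hφint v').1.aemeasurable.sub
      (hφint v).1.aemeasurable).div_const (v' - v)).aestronglyMeasurable
  have main := tendsto_integral_filter_of_dominated_convergence bound hF_meas
    (Eventually.of_forall h_bound) hbint h_lim
  -- translate to HasDerivAt
  have hI : HasDerivAt (fun v' => ∫ s, spow (u * f s + v' * g s) (α - 1) * f s ∂μ)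
      (∫ s, |x s| ^ (α - 2) * (f s * g s) * (α - 1) ∂μ) v := by
    rw [hasDerivAt_iff_tendsto_slope]
    apply main.congr'
    filter_upwards [self_mem_nhdsWithin] with v' (hv' : v' ≠ v)
    rw [slope_def_field]
    rw [← integral_sub (hφint v') (hφint v), ← integral_div]
  have hfinal := HasDerivAt.const_mul α hI
  refine hfinal.congr_deriv ?_
  have e2 : (∫ s, (if f s = 0 ∨ g s = 0 then (0:ℝ) else
      |u * f s + v * g s| ^ (α - 2) * (f s * g s)) ∂μ)
      = ∫ s, |x s| ^ (α - 2) * (f s * g s) ∂μ := by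
    congr 1
    exact funext hifr
  have e3 : (∫ s, |x s| ^ (α - 2) * (f s * g s) * (α - 1) ∂μ)
      = (∫ s, |x s| ^ (α - 2) * (f s * g s) ∂μ) * (α - 1) := integral_mul_const _ _
  rw [e2, e3]
  ring
end S

end AuxLemmas

/-- Paper's Lemma 5.1. -/
theorem stmt14 {S : Type*} [MeasurableSpace S] (μ : Measure S) [SigmaFinite μ]
    (α : ℝ) (hα1 : 1 < α) (hα2 : α < 2) (f g : S → ℝ)
    (hf : MemLalpha α μ f) (hg : MemLalpha α μ g) (u v : ℝ) :
    HasDerivAt (fun u' => ∫ s, |u' * f s + v * g s| ^ α ∂μ)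
      (α * ∫ s, spow (u * f s + v * g s) (α - 1) * f s ∂μ) u ∧
    ((∫⁻ s, (if f s = 0 ∨ g s = 0 then (0:ℝ≥0∞) else
        (ENNReal.ofReal |u * f s + v * g s|) ^ (α - 2) *
          ENNReal.ofReal (|f s| * |g s|)) ∂μ) < ⊤ →
      HasDerivAt (fun v' => α * ∫ s, spow (u * f s + v' * g s) (α - 1) * f s ∂μ)
        (α * (α - 1) * ∫ s, (if f s = 0 ∨ g s = 0 then (0:ℝ) else
          |u * f s + v * g s| ^ (α - 2) * (f s * g s)) ∂μ) v) :=
  ⟨part1 hα1 hα2 hf hg u v, fun hfin => part2 hα1 hα2 hf hg u v hfin⟩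
end

section
/- Let α > 0, let γ > 0 and δ > 0 with γ + δ = α, and let a ∈ L^α(ℝ, dx). If ∑_{m=−∞}^{∞} (∫_{m−1}^{m} |a(x)|^α dx)^{min(γ,δ)/α} < ∞, then ∑_{n=−∞}^{∞} ∫_ℝ |a(−x)|^γ |a(n−x)|^δ dx < ∞. (Paper's Lemma 6.1.) -/
open MeasureTheory Real Set Filter
open scoped ENNReal Topology

/-- Paper's Lemma 6.1. -/
theorem stmt17 (α γ δ : ℝ) (hα : 0 < α) (hγ : 0 < γ) (hδ : 0 < δ) (hγδ : γ + δ = α)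
    (a : ℝ → ℝ) (ha : MemLalpha α (volume : Measure ℝ) a)
    (hsum : Summable (fun m : ℤ =>
      (∫ x in Set.Ioc ((m : ℝ) - 1) (m : ℝ), |a x| ^ α) ^ (min γ δ / α))) :
    ∑' n : ℤ, ∫⁻ x : ℝ, ENNReal.ofReal (|a (-x)| ^ γ * |a ((n : ℝ) - x)| ^ δ) < ⊤ := by
  classical
  -- basic facts
  have hγα : γ < α := by linarith
  have hδα : δ < α := by linarith
  have haem : AEMeasurable a (volume : Measure ℝ) := ha.1.aemeasurable
  have mp : ∀ c : ℝ, MeasurePreserving (fun x : ℝ => c - x) volume volume := fun c =>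
    Measure.measurePreserving_sub_left volume c
  have me : ∀ c : ℝ, MeasurableEmbedding (fun x : ℝ => c - x) := fun c =>
    (MeasurableEquiv.subLeft c).measurableEmbedding
  set B : ℤ → ℝ≥0∞ := fun m =>
    ∫⁻ x in Set.Ioc ((m : ℝ) - 1) (m : ℝ), ENNReal.ofReal (|a x| ^ α) with hBdef
  -- the union of the intervals is everything, and they are disjoint
  have hUnion : (⋃ m : ℤ, Set.Ioc ((m : ℝ) - 1) (m : ℝ)) = Set.univ := by
    ext x
    simp only [Set.mem_iUnion, Set.mem_Ioc, Set.mem_univ, iff_true]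
    refine ⟨⌈x⌉, ?_, Int.le_ceil x⟩
    have := Int.ceil_lt_add_one x
    linarith
  have hdisj : Pairwise (Function.onFun Disjoint fun m : ℤ => Set.Ioc ((m : ℝ) - 1) (m : ℝ)) := by
    intro i j hij
    simp only [Function.onFun]
    rw [Set.disjoint_left]
    rintro x ⟨h1, h2⟩ ⟨h3, h4⟩
    rcases hij.lt_or_gt with h | h
    · have hij' : (i : ℝ) + 1 ≤ j := by exact_mod_cast Int.lt_iff_add_one_le.1 h
      linarith
    · have hij' : (j : ℝ) + 1 ≤ i := by exact_mod_cast Int.lt_iff_add_one_le.1 h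
      linarith
  -- change of variables
  have cov : ∀ (c : ℝ) (m : ℤ),
      (∫⁻ x in Set.Ioc ((m : ℝ) - 1) (m : ℝ), ENNReal.ofReal (|a (c - x)| ^ α))
        = ∫⁻ y in Set.Ioc (c - (m : ℝ)) (c - ((m : ℝ) - 1)), ENNReal.ofReal (|a y| ^ α) := by
    intro c m
    rw [(mp c).setLIntegral_comp_emb (me c) (fun y => ENNReal.ofReal (|a y| ^ α))
        (Set.Ioc ((m : ℝ) - 1) (m : ℝ)), Set.image_const_sub_Ioc]
    exact setLIntegral_congr Ico_ae_eq_Ioc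
  -- measurability of the pieces
  have hmeasf : ∀ (c p : ℝ), AEMeasurable (fun x : ℝ => ENNReal.ofReal (|a (c - x)| ^ p))
      (volume : Measure ℝ) := by
    intro c p
    have h1 : AEMeasurable (fun x : ℝ => a (c - x)) volume :=
      haem.comp_quasiMeasurePreserving (mp c).quasiMeasurePreserving
    have h2 : AEMeasurable (fun x : ℝ => |a (c - x)|) volume := by
      simpa [Real.norm_eq_abs] using h1.norm
    exact (h2.pow aemeasurable_const).ennreal_ofReal
  -- conjugate exponents
  have hconj : (α / γ).HolderConjugate (α / δ) := by
    constructor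
    · rw [inv_div, inv_div, ← add_div, hγδ, div_self hα.ne', inv_one]
    · positivity
    · positivity
  -- pointwise rpow identities
  have hfe : ∀ (p : ℝ), 0 < p → ∀ t : ℝ,
      (ENNReal.ofReal (|t| ^ p)) ^ (α / p) = ENNReal.ofReal (|t| ^ α) := by
    intro p hp t
    rw [ENNReal.ofReal_rpow_of_nonneg (Real.rpow_nonneg (abs_nonneg _) _)
      (by positivity)]
    congr 1
    rw [← Real.rpow_mul (abs_nonneg _)]
    congr 1
    field_simp
  -- the per-piece Hölder bound
  have hpiece : ∀ n m : ℤ,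
      (∫⁻ x in Set.Ioc ((m : ℝ) - 1) (m : ℝ),
          ENNReal.ofReal (|a (-x)| ^ γ * |a ((n : ℝ) - x)| ^ δ))
        ≤ B (1 - m) ^ (γ / α) * B (n - m + 1) ^ (δ / α) := by
    intro n m
    set I := Set.Ioc ((m : ℝ) - 1) (m : ℝ) with hI
    have hf : AEMeasurable (fun x : ℝ => ENNReal.ofReal (|a (-x)| ^ γ))
        (volume.restrict I) := by
      have := (hmeasf 0 γ).restrict (s := I)
      simpa [zero_sub] using this
    have hg : AEMeasurable (fun x : ℝ => ENNReal.ofReal (|a ((n : ℝ) - x)| ^ δ))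
        (volume.restrict I) := (hmeasf n δ).restrict
    have step1 : (∫⁻ x in I, ENNReal.ofReal (|a (-x)| ^ γ * |a ((n : ℝ) - x)| ^ δ))
        = ∫⁻ x in I, ((fun x => ENNReal.ofReal (|a (-x)| ^ γ)) *
            (fun x => ENNReal.ofReal (|a ((n : ℝ) - x)| ^ δ))) x := by
      refine lintegral_congr fun x => ?_
      simp only [Pi.mul_apply]
      rw [ENNReal.ofReal_mul (Real.rpow_nonneg (abs_nonneg _) _)]
    have step2 := ENNReal.lintegral_mul_le_Lp_mul_Lq (volume.restrict I) hconj hf hg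
    have hI1 : (∫⁻ x in I, ENNReal.ofReal (|a (-x)| ^ γ) ^ (α / γ)) = B (1 - m) := by
      have e1 : (∫⁻ x in I, ENNReal.ofReal (|a (-x)| ^ γ) ^ (α / γ))
          = ∫⁻ x in I, ENNReal.ofReal (|a ((0 : ℝ) - x)| ^ α) := by
        refine lintegral_congr fun x => ?_
        rw [zero_sub]
        exact hfe γ hγ _
      rw [e1, cov 0 m]
      rw [hBdef]
      have hset : Set.Ioc ((0 : ℝ) - (m : ℝ)) (0 - ((m : ℝ) - 1))
          = Set.Ioc (((1 - m : ℤ) : ℝ) - 1) ((1 - m : ℤ) : ℝ) := by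
        push_cast
        congr 1 <;> ring
      rw [hset]
    have hI2 : (∫⁻ x in I, ENNReal.ofReal (|a ((n : ℝ) - x)| ^ δ) ^ (α / δ))
        = B (n - m + 1) := by
      have e2 : (∫⁻ x in I, ENNReal.ofReal (|a ((n : ℝ) - x)| ^ δ) ^ (α / δ))
          = ∫⁻ x in I, ENNReal.ofReal (|a ((n : ℝ) - x)| ^ α) :=
        lintegral_congr fun x => hfe δ hδ _
      rw [e2, cov (n : ℝ) m]
      rw [hBdef]
      have hset : Set.Ioc ((n : ℝ) - (m : ℝ)) ((n : ℝ) - ((m : ℝ) - 1))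
          = Set.Ioc (((n - m + 1 : ℤ) : ℝ) - 1) ((n - m + 1 : ℤ) : ℝ) := by
        push_cast
        congr 1 <;> ring
      rw [hset]
    calc (∫⁻ x in I, ENNReal.ofReal (|a (-x)| ^ γ * |a ((n : ℝ) - x)| ^ δ))
        = ∫⁻ x in I, ((fun x => ENNReal.ofReal (|a (-x)| ^ γ)) *
            (fun x => ENNReal.ofReal (|a ((n : ℝ) - x)| ^ δ))) x := step1
      _ ≤ (∫⁻ x in I, ENNReal.ofReal (|a (-x)| ^ γ) ^ (α / γ)) ^ (1 / (α / γ)) *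
          (∫⁻ x in I, ENNReal.ofReal (|a ((n : ℝ) - x)| ^ δ) ^ (α / δ)) ^ (1 / (α / δ)) := step2
      _ = B (1 - m) ^ (γ / α) * B (n - m + 1) ^ (δ / α) := by
          rw [hI1, hI2, one_div_div, one_div_div]
  -- summability of the B's
  have haux : ∀ (p : ℝ), 1 ≤ p → ∀ x : ℤ → ℝ≥0∞, (∑' m, x m) ≠ ⊤ →
      (∑' m, x m ^ p) ≠ ⊤ := by
    intro p hp x hS
    have hbound : ∀ m, x m ^ p ≤ (∑' k, x k) ^ (p - 1) * x m := by
      intro m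
      rcases eq_or_ne (x m) 0 with h0 | h0
      · rw [h0, ENNReal.zero_rpow_of_pos (by linarith)]
        simp
      · have hxt : x m ≠ ⊤ := ENNReal.ne_top_of_tsum_ne_top hS m
        have heq : x m ^ p = x m ^ (p - 1) * x m := by
          calc x m ^ p = x m ^ ((p - 1) + 1) := by norm_num
            _ = x m ^ (p - 1) * x m ^ (1 : ℝ) := ENNReal.rpow_add _ _ h0 hxt
            _ = x m ^ (p - 1) * x m := by rw [ENNReal.rpow_one]
        rw [heq]
        exact mul_le_mul' (ENNReal.rpow_le_rpow (ENNReal.le_tsum m) (by linarith)) le_rfl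
    have h2 : (∑' m, x m ^ p) ≤ (∑' k, x k) ^ (p - 1) * ∑' m, x m := by
      calc (∑' m, x m ^ p) ≤ ∑' m, (∑' k, x k) ^ (p - 1) * x m := ENNReal.tsum_le_tsum hbound
        _ = (∑' k, x k) ^ (p - 1) * ∑' m, x m := ENNReal.tsum_mul_left
    intro ht
    rw [ht] at h2
    have hfin : ((∑' k, x k) ^ (p - 1) * ∑' m, x m) ≠ ⊤ :=
      ENNReal.mul_ne_top (ENNReal.rpow_ne_top_of_nonneg (by linarith) hS) hS
    exact hfin (top_le_iff.1 h2)
  set r : ℝ := min γ δ with hrdef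
  have hr : 0 < r := lt_min hγ hδ
  have hc_nn : ∀ m : ℤ, 0 ≤ ∫ x in Set.Ioc ((m : ℝ) - 1) (m : ℝ), |a x| ^ α := fun m =>
    integral_nonneg fun x => Real.rpow_nonneg (abs_nonneg _) _
  have hBof : ∀ m : ℤ, B m = ENNReal.ofReal (∫ x in Set.Ioc ((m : ℝ) - 1) (m : ℝ), |a x| ^ α) := by
    intro m
    rw [hBdef]
    exact (ofReal_integral_eq_lintegral_ofReal (ha.2.integrableOn)
      (ae_of_all _ fun x => Real.rpow_nonneg (abs_nonneg _) _)).symm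
  have hSr : (∑' m : ℤ, B m ^ (r / α)) ≠ ⊤ := by
    have heq : ∀ m : ℤ, B m ^ (r / α)
        = ENNReal.ofReal ((∫ x in Set.Ioc ((m : ℝ) - 1) (m : ℝ), |a x| ^ α) ^ (r / α)) := by
      intro m
      rw [hBof m, ENNReal.ofReal_rpow_of_nonneg (hc_nn m) (by positivity)]
    rw [tsum_congr heq, ← ENNReal.ofReal_tsum_of_nonneg
      (fun m => Real.rpow_nonneg (hc_nn m) _) hsum]
    exact ENNReal.ofReal_ne_top
  have hSpow : ∀ (s : ℝ), 0 < s → r ≤ s → (∑' m : ℤ, B m ^ (s / α)) ≠ ⊤ := by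
    intro s hs hrs
    have hkey : ∀ m : ℤ, B m ^ (s / α) = (B m ^ (r / α)) ^ (s / r) := by
      intro m
      rw [← ENNReal.rpow_mul]
      congr 1
      field_simp
    rw [tsum_congr hkey]
    exact haux (s / r) ((one_le_div hr).2 hrs) _ hSr
  have hSγ : (∑' m : ℤ, B m ^ (γ / α)) ≠ ⊤ := hSpow γ hγ (min_le_left _ _)
  have hSδ : (∑' m : ℤ, B m ^ (δ / α)) ≠ ⊤ := hSpow δ hδ (min_le_right _ _)
  -- main computation
  have main : ∀ n : ℤ, (∫⁻ x : ℝ, ENNReal.ofReal (|a (-x)| ^ γ * |a ((n : ℝ) - x)| ^ δ))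
      ≤ ∑' m : ℤ, B (1 - m) ^ (γ / α) * B (n - m + 1) ^ (δ / α) := by
    intro n
    rw [← setLIntegral_univ, ← hUnion, lintegral_iUnion (fun _ => measurableSet_Ioc) hdisj]
    exact ENNReal.tsum_le_tsum fun m => hpiece n m
  have reindex1 : ∀ m : ℤ, (∑' n : ℤ, B (n - m + 1) ^ (δ / α)) = ∑' k : ℤ, B k ^ (δ / α) := by
    intro m
    have h1 : (∑' n : ℤ, B (n - m + 1) ^ (δ / α))
        = ∑' n : ℤ, B ((Equiv.addRight (1 - m)) n) ^ (δ / α) := by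
      refine tsum_congr fun n => ?_
      congr 2
      simp [Equiv.addRight]
      ring
    rw [h1]
    exact Equiv.tsum_eq (Equiv.addRight (1 - m)) fun k => B k ^ (δ / α)
  have reindex2 : (∑' m : ℤ, B (1 - m) ^ (γ / α)) = ∑' k : ℤ, B k ^ (γ / α) := by
    have h1 : (∑' m : ℤ, B (1 - m) ^ (γ / α))
        = ∑' m : ℤ, B ((Equiv.subLeft 1) m) ^ (γ / α) := by
      refine tsum_congr fun m => ?_
      congr 2
    rw [h1]
    exact Equiv.tsum_eq (Equiv.subLeft 1) fun k => B k ^ (γ / α)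
  calc ∑' n : ℤ, ∫⁻ x : ℝ, ENNReal.ofReal (|a (-x)| ^ γ * |a ((n : ℝ) - x)| ^ δ)
      ≤ ∑' n : ℤ, ∑' m : ℤ, B (1 - m) ^ (γ / α) * B (n - m + 1) ^ (δ / α) :=
        ENNReal.tsum_le_tsum main
    _ = ∑' m : ℤ, ∑' n : ℤ, B (1 - m) ^ (γ / α) * B (n - m + 1) ^ (δ / α) :=
        ENNReal.tsum_comm
    _ = ∑' m : ℤ, B (1 - m) ^ (γ / α) * ∑' n : ℤ, B (n - m + 1) ^ (δ / α) :=
        tsum_congr fun m => ENNReal.tsum_mul_left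
    _ = ∑' m : ℤ, B (1 - m) ^ (γ / α) * ∑' k : ℤ, B k ^ (δ / α) :=
        tsum_congr fun m => by rw [reindex1 m]
    _ = (∑' m : ℤ, B (1 - m) ^ (γ / α)) * ∑' k : ℤ, B k ^ (δ / α) := ENNReal.tsum_mul_right
    _ = (∑' k : ℤ, B k ^ (γ / α)) * ∑' k : ℤ, B k ^ (δ / α) := by rw [reindex2]
    _ < ⊤ := ENNReal.mul_lt_top hSγ.lt_top hSδ.lt_top
end

section
/- Let Q ≥ 1 be an integer, let κ ∈ ℝ, and let ψ: ℝ → ℝ be a bounded, compactly supported measurable function such that ∫_ℝ ψ(t) t^m dt = 0 for all m = 0, 1, …, Q−1. Define h(u) := ∫_ℝ (s + u)₊^κ ψ(s) ds, where x₊^κ := x^κ for x > 0 and x₊^κ := 0 for x ≤ 0. Then there exist constants C > 0 and u₀ > 0 such that |h(u)| ≤ C u^{κ−Q} for all u ≥ u₀. (Paper's Lemma 7.1.) -/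
open MeasureTheory Real Set Filter
open scoped ENNReal Topology

/-- Taylor coefficients of `x ↦ x^κ`: `cc m κ = κ(κ-1)⋯(κ-m+1)/m!`. -/
noncomputable def cc : ℕ → ℝ → ℝ
  | 0, _ => 1
  | (m+1), κ => κ * cc m (κ-1) / (m+1)

lemma cc_succ_mul (m : ℕ) (κ : ℝ) : ((m:ℝ)+1) * cc (m+1) κ = κ * cc m (κ-1) := by
  rw [cc]
  field_simp

lemma base_bound {u s κ : ℝ} (hu : 1 ≤ u) (hs : |s| ≤ u/2) :
    (s+u)^κ ≤ (2:ℝ)^|κ| * u^κ := by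
  have hu0 : (0:ℝ) < u := lt_of_lt_of_le one_pos hu
  have h1 : u/2 ≤ s+u := by have := neg_le_of_abs_le hs; linarith
  have h2 : s+u ≤ 2*u := by have := le_of_abs_le hs; linarith
  have hsu : 0 < s+u := lt_of_lt_of_le (by linarith) h1
  rw [Real.rpow_def_of_pos hsu, Real.rpow_def_of_pos hu0,
    Real.rpow_def_of_pos two_pos, ← Real.exp_add]
  apply Real.exp_le_exp.2
  have hlog : |Real.log (s+u) - Real.log u| ≤ Real.log 2 := by
    rw [abs_le]
    constructor
    · have h3 : Real.log (u/2) ≤ Real.log (s+u) := Real.log_le_log (by positivity) h1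
      rw [Real.log_div (ne_of_gt hu0) (by norm_num)] at h3
      linarith
    · have h3 : Real.log (s+u) ≤ Real.log (2*u) := Real.log_le_log hsu h2
      rw [Real.log_mul (by norm_num) (ne_of_gt hu0)] at h3
      linarith
  have : κ * (Real.log (s+u) - Real.log u) ≤ |κ| * Real.log 2 := by
    calc κ * (Real.log (s+u) - Real.log u) ≤ |κ * (Real.log (s+u) - Real.log u)| := le_abs_self _
    _ = |κ| * |Real.log (s+u) - Real.log u| := abs_mul _ _
    _ ≤ |κ| * Real.log 2 := by
        exact mul_le_mul_of_nonneg_left hlog (abs_nonneg _)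
  nlinarith [this]

lemma key (Q : ℕ) : ∀ κ : ℝ, ∃ C > (0:ℝ), ∀ u : ℝ, 1 ≤ u → ∀ s : ℝ, |s| ≤ u/2 →
    |(s+u)^κ - ∑ m ∈ Finset.range Q, cc m κ * u^(κ - m) * s^m|
      ≤ C * |s|^Q * u^(κ - Q) := by
  induction Q with
  | zero =>
    intro κ
    refine ⟨2^|κ|, by positivity, fun u hu s hs => ?_⟩
    have hu0 : (0:ℝ) < u := lt_of_lt_of_le one_pos hu
    have h1 : u/2 ≤ s+u := by have := neg_le_of_abs_le hs; linarith
    have hsu : 0 < s+u := lt_of_lt_of_le (by linarith) h1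
    simp only [Finset.range_zero, Finset.sum_empty, sub_zero, pow_zero, mul_one,
      Nat.cast_zero]
    rw [abs_of_pos (Real.rpow_pos_of_pos hsu κ)]
    exact base_bound hu hs
  | succ Q ih =>
    intro κ
    obtain ⟨C, hC, hkey⟩ := ih (κ-1)
    refine ⟨C * (|κ|+1), by positivity, fun u hu s hs => ?_⟩
    have hu0 : (0:ℝ) < u := lt_of_lt_of_le one_pos hu
    set F : ℝ → ℝ := fun t => (t+u)^κ - ∑ m ∈ Finset.range (Q+1), cc m κ * u^(κ - m) * t^m
      with hF
    set F' : ℝ → ℝ := fun t => κ * ((t+u)^(κ-1)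
      - ∑ m ∈ Finset.range Q, cc m (κ-1) * u^((κ-1) - m) * t^m) with hF'
    have hderiv : ∀ t ∈ Icc (-|s|) |s|, HasDerivAt F (F' t) t := by
      intro t ht
      obtain ⟨ht1, ht2⟩ := ht
      have htu : 0 < t + u := by
        have : |s| ≤ u/2 := hs
        linarith
      have hd1 : HasDerivAt (fun t : ℝ => (t+u)^κ) (κ * (t+u)^(κ-1)) t := by
        have h := Real.hasDerivAt_rpow_const (x := t+u) (p := κ) (Or.inl (ne_of_gt htu))
        have h2 := HasDerivAt.comp t h ((hasDerivAt_id t).add_const u)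
        rw [mul_one] at h2
        exact h2
      have hd2 : HasDerivAt (fun t : ℝ => ∑ m ∈ Finset.range (Q+1), cc m κ * u^(κ - m) * t^m)
          (∑ m ∈ Finset.range (Q+1), cc m κ * u^(κ - m) * (m * t^(m-1))) t :=
        HasDerivAt.fun_sum fun m _ => (hasDerivAt_pow m t).const_mul _
      have hsum_eq : ∑ m ∈ Finset.range (Q+1), cc m κ * u^(κ - m) * (m * t^(m-1))
          = κ * ∑ m ∈ Finset.range Q, cc m (κ-1) * u^((κ-1) - m) * t^m := by
        rw [Finset.sum_range_succ', Finset.mul_sum]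
        simp only [Nat.cast_zero, zero_mul, mul_zero, add_zero, Nat.add_sub_cancel]
        apply Finset.sum_congr rfl
        intro m _
        have h1 := cc_succ_mul m κ
        have hexp : κ - ((m:ℝ)+1) = (κ-1) - m := by ring
        push_cast
        rw [hexp]
        linear_combination (u^((κ-1)-(m:ℝ)) * t^m) * h1
      have := hd1.sub hd2
      rw [hsum_eq] at this
      simpa [hF, hF', mul_sub, Pi.sub_def] using this
    have hbound : ∀ t ∈ Icc (-|s|) |s|, ‖F' t‖ ≤ (|κ|+1) * (C * |s|^Q * u^((κ-1) - Q)) := by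
      intro t ht
      obtain ⟨ht1, ht2⟩ := ht
      have hts : |t| ≤ |s| := abs_le.2 ⟨ht1, ht2⟩
      have htu2 : |t| ≤ u/2 := le_trans hts hs
      have hk := hkey u hu t htu2
      rw [hF']
      rw [Real.norm_eq_abs, abs_mul]
      have h2 : |t|^Q ≤ |s|^Q := pow_le_pow_left₀ (abs_nonneg t) hts Q
      have h3 : C * |t|^Q * u^((κ-1)-Q) ≤ C * |s|^Q * u^((κ-1)-Q) :=
        mul_le_mul_of_nonneg_right (mul_le_mul_of_nonneg_left h2 hC.le)
          (Real.rpow_nonneg hu0.le _)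
      have h5 : (0:ℝ) ≤ C * |s|^Q * u^((κ-1)-Q) := by positivity
      calc |κ| * |(t+u)^(κ-1) - ∑ m ∈ Finset.range Q, cc m (κ-1) * u^((κ-1) - m) * t^m|
          ≤ |κ| * (C * |s|^Q * u^((κ-1)-Q)) :=
            mul_le_mul_of_nonneg_left (le_trans hk h3) (abs_nonneg κ)
        _ ≤ (|κ|+1) * (C * |s|^Q * u^((κ-1)-Q)) := by nlinarith [abs_nonneg κ]
    have hmvt := Convex.norm_image_sub_le_of_norm_hasDerivWithin_le
      (f := F) (f' := F') (fun x hx => (hderiv x hx).hasDerivWithinAt) hbound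
      (convex_Icc _ _) (Set.mem_Icc.2 ⟨neg_nonpos_of_nonneg (abs_nonneg s), abs_nonneg s⟩)
      (Set.mem_Icc.2 ⟨neg_abs_le s, le_abs_self s⟩)
    have hF0 : F 0 = 0 := by
      rw [hF]
      simp only
      rw [Finset.sum_eq_single 0]
      · norm_num [cc]
      · intro m _ hm
        simp [zero_pow hm]
      · simp
    rw [hF0, sub_zero, Real.norm_eq_abs, Real.norm_eq_abs, sub_zero] at hmvt
    calc |F s| ≤ (|κ|+1) * (C * |s|^Q * u^((κ-1) - Q)) * |s| := hmvt
    _ = C * (|κ|+1) * |s|^(Q+1) * (u^((κ-1) - Q)) := by ring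
    _ = C * (|κ|+1) * |s|^(Q+1) * u^(κ - (Q+1:ℕ)) := by
        congr 1
        congr 1
        push_cast
        ring

lemma integrable_of_bound {f : ℝ → ℝ} (hf : AEStronglyMeasurable f volume) (A K : ℝ)
    (h : ∀ s, |f s| ≤ Set.indicator (Icc (-A) A) (fun _ => K) s) : Integrable f := by
  refine Integrable.mono' ?_ hf (ae_of_all _ (by simpa [Real.norm_eq_abs] using h))
  exact (integrable_indicator_iff measurableSet_Icc).2
    (integrableOn_const measure_Icc_lt_top.ne)

/-- Paper's Lemma 7.1. -/
theorem stmt19 (Q : ℕ) (hQ : 1 ≤ Q) (κ : ℝ) (ψ : ℝ → ℝ)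
    (hψm : Measurable ψ) (hψb : ∃ M : ℝ, ∀ t, |ψ t| ≤ M) (hψs : HasCompactSupport ψ)
    (hmom : ∀ m : ℕ, m < Q → ∫ t : ℝ, ψ t * t ^ m = 0) :
    ∃ C > (0:ℝ), ∃ u₀ > (0:ℝ), ∀ u : ℝ, u₀ ≤ u →
      |∫ s : ℝ, (if 0 < s + u then (s + u) ^ κ else 0) * ψ s| ≤ C * u ^ (κ - (Q : ℝ)) := by
  obtain ⟨M, hM⟩ := hψb
  have hM0 : 0 ≤ M := le_trans (abs_nonneg _) (hM 0)
  -- support ⊆ Icc (-A) A with A ≥ 1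
  obtain ⟨r, hr⟩ := hψs.isBounded.subset_closedBall 0
  set A : ℝ := max r 1 with hA
  have hA1 : (1:ℝ) ≤ A := le_max_right _ _
  have hA0 : (0:ℝ) < A := lt_of_lt_of_le one_pos hA1
  have hsupp : ∀ s : ℝ, ψ s ≠ 0 → |s| ≤ A := by
    intro s hs
    have h1 : s ∈ tsupport ψ := subset_tsupport ψ (by simpa using hs)
    have h2 := hr h1
    rw [Metric.mem_closedBall, Real.dist_eq, sub_zero] at h2
    exact le_trans h2 (le_max_left _ _)
  obtain ⟨C, hC, hkey⟩ := key Q κ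
  refine ⟨C * A^Q * (M+1) * 2 * A, by positivity, 2*A, by positivity, fun u hu => ?_⟩
  have hu1 : (1:ℝ) ≤ u := by linarith
  have hu0 : (0:ℝ) < u := by linarith
  have hAu : A ≤ u/2 := by linarith
  -- the polynomial part
  set P : ℝ → ℝ := fun s => ∑ m ∈ Finset.range Q, cc m κ * u^(κ - m) * s^m with hP
  set G : ℝ → ℝ := fun s => ((s+u)^κ - P s) * ψ s with hG
  have hGm : Measurable G := by
    apply Measurable.mul ?_ hψm
    apply Measurable.sub
    · fun_prop
    · exact Finset.measurable_sum _ fun m _ =>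
        ((measurable_id.pow_const m).const_mul _)
  have hGbound : ∀ s, |G s| ≤ Set.indicator (Icc (-A) A)
      (fun _ => C * A^Q * u^(κ - Q) * M) s := by
    intro s
    by_cases hψ0 : ψ s = 0
    · simp only [hG, hψ0, mul_zero, abs_zero]
      by_cases hmem : s ∈ Icc (-A) A
      · rw [Set.indicator_of_mem hmem]; positivity
      · rw [Set.indicator_of_notMem hmem]
    · have hsA : |s| ≤ A := hsupp s hψ0
      have hmem : s ∈ Icc (-A) A := Set.mem_Icc.2 (abs_le.1 hsA)
      rw [Set.indicator_of_mem hmem]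
      rw [hG, abs_mul]
      have h1 := hkey u hu1 s (le_trans hsA hAu)
      calc |(s+u)^κ - P s| * |ψ s| ≤ (C * |s|^Q * u^(κ - Q)) * M :=
        mul_le_mul h1 (hM s) (abs_nonneg _) (by positivity)
      _ ≤ C * A^Q * u^(κ - Q) * M := by
          have h2 : |s|^Q ≤ A^Q := pow_le_pow_left₀ (abs_nonneg s) hsA Q
          have h3 : (0:ℝ) ≤ u^(κ - Q) := Real.rpow_nonneg hu0.le _
          nlinarith [mul_le_mul_of_nonneg_right (mul_le_mul_of_nonneg_left h2 hC.le) h3,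
            mul_le_mul_of_nonneg_right
              (mul_le_mul_of_nonneg_right (mul_le_mul_of_nonneg_left h2 hC.le) h3) hM0]
  have hGint : Integrable G := integrable_of_bound hGm.aestronglyMeasurable _ _ hGbound
  -- each polynomial term is integrable with zero integral
  have hterm_m : ∀ m : ℕ, Measurable (fun s : ℝ => cc m κ * u^(κ - m) * (ψ s * s^m)) :=
    fun m => ((hψm.mul (measurable_id.pow_const m)).const_mul _)
  have hterm_int : ∀ m : ℕ, Integrable (fun s : ℝ => cc m κ * u^(κ - m) * (ψ s * s^m)) := by
    intro m
    apply integrable_of_bound (hterm_m m).aestronglyMeasurable A (|cc m κ * u^(κ - m)| * M * A^m)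
    intro s
    by_cases hψ0 : ψ s = 0
    · simp only [hψ0, zero_mul, mul_zero, abs_zero]
      by_cases hmem : s ∈ Icc (-A) A
      · rw [Set.indicator_of_mem hmem]; positivity
      · rw [Set.indicator_of_notMem hmem]
    · have hsA : |s| ≤ A := hsupp s hψ0
      rw [Set.indicator_of_mem (Set.mem_Icc.2 (abs_le.1 hsA))]
      rw [abs_mul]
      have h5 : |ψ s * s^m| ≤ M * A^m := by
        rw [abs_mul, abs_pow]
        exact mul_le_mul (hM s) (pow_le_pow_left₀ (abs_nonneg s) hsA m)
          (by positivity) hM0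
      rw [mul_assoc]
      exact mul_le_mul_of_nonneg_left h5 (abs_nonneg _)
  have hPψint : Integrable (fun s : ℝ => P s * ψ s) := by
    have : (fun s : ℝ => P s * ψ s)
        = fun s => ∑ m ∈ Finset.range Q, cc m κ * u^(κ - m) * (ψ s * s^m) := by
      funext s
      rw [hP, Finset.sum_mul]
      exact Finset.sum_congr rfl fun m _ => by ring
    rw [this]
    exact integrable_finset_sum _ fun m _ => hterm_int m
  have hPψ0 : ∫ s : ℝ, P s * ψ s = 0 := by
    have heq : (fun s : ℝ => P s * ψ s)
        = fun s => ∑ m ∈ Finset.range Q, cc m κ * u^(κ - m) * (ψ s * s^m) := by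
      funext s
      rw [hP, Finset.sum_mul]
      exact Finset.sum_congr rfl fun m _ => by ring
    rw [heq, integral_finset_sum _ fun m _ => hterm_int m]
    apply Finset.sum_eq_zero
    intro m hm
    rw [integral_const_mul, hmom m (Finset.mem_range.1 hm), mul_zero]
  -- pointwise identity
  have hpt : (fun s : ℝ => (if 0 < s + u then (s + u) ^ κ else 0) * ψ s)
      = fun s => G s + P s * ψ s := by
    funext s
    by_cases hψ0 : ψ s = 0
    · simp [hG, hψ0]
    · have hsA : |s| ≤ A := hsupp s hψ0
      have hpos : 0 < s + u := by
        have := neg_le_of_abs_le hsA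
        linarith
      rw [if_pos hpos, hG]
      ring
  rw [hpt, integral_add hGint hPψint, hPψ0, add_zero]
  have h8 : (0:ℝ) ≤ u^(κ - (Q:ℝ)) := Real.rpow_nonneg hu0.le _
  have h9 : (0:ℝ) ≤ C * A^Q * u^(κ - (Q:ℝ)) :=
    mul_nonneg (mul_nonneg hC.le (pow_nonneg hA0.le Q)) h8
  have h6 : |∫ s : ℝ, G s| ≤ (C * A^Q * u^(κ - (Q:ℝ)) * M) * (2*A) := by
    have h7 : ‖∫ s : ℝ, G s‖ ≤ ∫ s : ℝ, Set.indicator (Icc (-A) A)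
        (fun _ => C * A^Q * u^(κ - (Q:ℝ)) * M) s :=
      norm_integral_le_of_norm_le
        ((integrable_indicator_iff measurableSet_Icc).2
          (integrableOn_const measure_Icc_lt_top.ne))
        (ae_of_all _ (fun s => by simpa [Real.norm_eq_abs] using hGbound s))
    rw [Real.norm_eq_abs] at h7
    refine le_trans h7 ?_
    rw [integral_indicator_const _ measurableSet_Icc, smul_eq_mul,
      Real.volume_real_Icc_of_le (by linarith)]
    exact le_of_eq (by ring)
  refine le_trans h6 ?_
  calc (C * A^Q * u^(κ - (Q:ℝ)) * M) * (2*A)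
      ≤ (C * A^Q * u^(κ - (Q:ℝ)) * (M+1)) * (2*A) := by
        refine mul_le_mul_of_nonneg_right ?_ (by linarith)
        exact mul_le_mul_of_nonneg_left (by linarith) h9
    _ = C * A^Q * (M+1) * 2 * A * u^(κ - (Q:ℝ)) := by ring
end
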